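/- arXiv:2401.07140 — 8 statements merged into one kernel-verified Lean document; each statement's English description precedes it below -/
import Mathlib

section
/- Let α ∈ (0,1), let u : ℝ → ℝ be bounded and continuously differentiable with bounded derivative, and let x ∈ ℝ. Then (1/Γ(−α)) ∫_{−∞}^{0} (u(x+z) − u(x))/|z|^{1+α} dz = (1/Γ(1−α)) · lim_{R→∞} ∫_{0}^{R} u'(x−z)/z^{α} dz; in particular the improper integral on the right converges. -/
open MeasureTheory Set Filter Topology

/-- For `α ∈ (0,1)`, `u : ℝ → ℝ` bounded, C¹ with bounded derivative, and `x ∈ ℝ`,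
`(1/Γ(−α)) ∫_{−∞}^{0} (u(x+z) − u(x))/|z|^{1+α} dz
  = (1/Γ(1−α)) · lim_{R→∞} ∫_{0}^{R} u'(x−z)/z^{α} dz`,
the improper integral on the right converging to the stated value. -/
theorem weylMarchaud_repr
    (α : ℝ) (hα : α ∈ Set.Ioo (0:ℝ) 1)
    (u : ℝ → ℝ) (hu : ContDiff ℝ 1 u)
    (hub : ∃ M, ∀ y, |u y| ≤ M)
    (hub' : ∃ M, ∀ y, |deriv u y| ≤ M)
    (x : ℝ) :
    Tendsto
      (fun R : ℝ => (1 / Real.Gamma (1 - α)) * ∫ z in Ioc (0:ℝ) R, deriv u (x - z) / z ^ α)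
      atTop
      (𝓝 ((1 / Real.Gamma (-α)) *
        ∫ z in Iio (0:ℝ), (u (x + z) - u x) / |z| ^ (1 + α))) := by
  obtain ⟨hα0, hα1⟩ := hα
  obtain ⟨M, hM⟩ := hub
  obtain ⟨M', hM'⟩ := hub'
  have hM0 : 0 ≤ M := (abs_nonneg _).trans (hM 0)
  have hM'0 : 0 ≤ M' := (abs_nonneg _).trans (hM' 0)
  have hud : Differentiable ℝ u := hu.differentiable one_ne_zero
  have hucd : Continuous (deriv u) := hu.continuous_deriv le_rfl
  -- Lipschitz bound
  have hlip : ∀ a b : ℝ, |u a - u b| ≤ M' * |a - b| := by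
    intro a b
    have h := lipschitzWith_of_nnnorm_deriv_le (C := NNReal.mk M' hM'0) hud
      (fun y => by simpa [← NNReal.coe_le_coe, Real.norm_eq_abs] using hM' y)
    have := h.dist_le_mul a b
    simpa [Real.dist_eq] using this
  set f : ℝ → ℝ := fun z => deriv u (x - z) / z ^ α with hfdef
  set g : ℝ → ℝ := fun z => (u (x + z) - u x) / |z| ^ (1 + α) with hgdef
  set c : ℝ → ℝ := fun z => (u (x - z) - u x) / z ^ (1 + α) with hcdef
  set F : ℝ → ℝ := fun z => (u (x - z) - u x) * z ^ (-α) with hFdef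
  -- continuity facts
  have hf_cont : ContinuousOn f (Ioi 0) := by
    apply ContinuousOn.div
    · exact (hucd.comp (continuous_const.sub continuous_id)).continuousOn
    · intro t ht
      exact ((Real.continuousAt_rpow_const t α (Or.inl (ne_of_gt ht))).continuousWithinAt)
    · intro t ht
      exact ne_of_gt (Real.rpow_pos_of_pos ht α)
  have hc_cont : ContinuousOn c (Ioi 0) := by
    apply ContinuousOn.div
    · exact ((hu.continuous.comp (continuous_const.sub continuous_id)).sub
        continuous_const).continuousOn
    · intro t ht
      exact ((Real.continuousAt_rpow_const t (1+α) (Or.inl (ne_of_gt ht))).continuousWithinAt)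
    · intro t ht
      exact ne_of_gt (Real.rpow_pos_of_pos ht (1+α))
  -- bounds
  have hf_bound : ∀ t ∈ Ioi (0:ℝ), |f t| ≤ M' * t ^ (-α) := by
    intro t ht
    have ht0 : (0:ℝ) < t := ht
    have h1 : |f t| = |deriv u (x - t)| / t ^ α := by
      rw [hfdef]; simp [abs_div, abs_of_pos (Real.rpow_pos_of_pos ht0 α)]
    rw [h1, Real.rpow_neg ht0.le, div_eq_mul_inv]
    gcongr
    exact hM' _
  have hc_bound1 : ∀ t ∈ Ioc (0:ℝ) 1, |c t| ≤ M' * t ^ (-α) := by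
    intro t ht
    have ht0 : (0:ℝ) < t := ht.1
    have h1 : |c t| = |u (x - t) - u x| / t ^ (1+α) := by
      rw [hcdef]; simp [abs_div, abs_of_pos (Real.rpow_pos_of_pos ht0 (1+α))]
    have h2 : |u (x - t) - u x| ≤ M' * t := by
      have := hlip (x - t) x
      simpa [abs_of_pos ht0] using this
    rw [h1, div_le_iff₀ (Real.rpow_pos_of_pos ht0 (1+α))]
    calc |u (x - t) - u x| ≤ M' * t := h2
      _ = M' * t ^ (-α) * t ^ (1+α) := by
          rw [mul_assoc, ← Real.rpow_add ht0]
          norm_num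
  have hc_bound2 : ∀ t ∈ Ioi (1:ℝ), |c t| ≤ (2*M) * t ^ (-(1+α)) := by
    intro t ht
    have ht0 : (0:ℝ) < t := lt_trans zero_lt_one ht
    have h1 : |c t| = |u (x - t) - u x| / t ^ (1+α) := by
      rw [hcdef]; simp [abs_div, abs_of_pos (Real.rpow_pos_of_pos ht0 (1+α))]
    have h2 : |u (x - t) - u x| ≤ 2 * M := by
      calc |u (x - t) - u x| ≤ |u (x - t)| + |u x| := abs_sub _ _
        _ ≤ M + M := add_le_add (hM _) (hM _)
        _ = 2 * M := by ring
    rw [h1, Real.rpow_neg ht0.le, div_eq_mul_inv]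
    gcongr
  -- integrability of the dominating functions
  have hrpow_int : ∀ R : ℝ, IntegrableOn (fun t : ℝ => M' * t ^ (-α)) (Ioc 0 R) := by
    intro R
    rcases le_or_gt R 0 with h | h
    · rw [Ioc_eq_empty (by exact not_lt.mpr h)]
      simp
    · have : IntervalIntegrable (fun t : ℝ => t ^ (-α)) volume 0 R :=
        intervalIntegral.intervalIntegrable_rpow' (by linarith)
      exact ((intervalIntegrable_iff_integrableOn_Ioc_of_le h.le).mp this).const_mul M'
  -- integrability of f on Ioc 0 R
  have hf_int : ∀ R : ℝ, IntegrableOn f (Ioc 0 R) := by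
    intro R
    apply Integrable.mono' (hrpow_int R)
    · exact (hf_cont.mono Ioc_subset_Ioi_self).aestronglyMeasurable measurableSet_Ioc
    · refine (ae_restrict_iff' measurableSet_Ioc).mpr (ae_of_all _ ?_)
      intro t ht
      simpa [Real.norm_eq_abs] using hf_bound t ht.1
  -- integrability of c on Ioi 0
  have hc_int : IntegrableOn c (Ioi 0) := by
    have h1 : IntegrableOn c (Ioc 0 1) := by
      apply Integrable.mono' (hrpow_int 1)
      · exact (hc_cont.mono Ioc_subset_Ioi_self).aestronglyMeasurable measurableSet_Ioc
      · refine (ae_restrict_iff' measurableSet_Ioc).mpr (ae_of_all _ ?_)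
        intro t ht
        simpa [Real.norm_eq_abs] using hc_bound1 t ht
    have h2 : IntegrableOn c (Ioi 1) := by
      apply Integrable.mono' ((integrableOn_Ioi_rpow_of_lt (a := -(1+α)) (by linarith) zero_lt_one).const_mul
        (2*M))
      · exact (hc_cont.mono (fun t (ht : t ∈ Ioi (1:ℝ)) => (lt_trans zero_lt_one ht : (0:ℝ) < t))).aestronglyMeasurable
          measurableSet_Ioi
      · refine (ae_restrict_iff' measurableSet_Ioi).mpr (ae_of_all _ ?_)
        intro t ht
        simpa [Real.norm_eq_abs] using hc_bound2 t ht
    have := h1.union h2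
    rwa [Ioc_union_Ioi_eq_Ioi zero_le_one] at this
  have hc_intR : ∀ R : ℝ, IntegrableOn c (Ioc 0 R) :=
    fun R => hc_int.mono_set Ioc_subset_Ioi_self
  -- |F| bounds
  have hF_bound_small : ∀ t : ℝ, 0 < t → |F t| ≤ M' * t ^ (1-α) := by
    intro t ht
    have h2 : |u (x - t) - u x| ≤ M' * t := by
      have := hlip (x - t) x
      simpa [abs_of_pos ht] using this
    have : |F t| = |u (x - t) - u x| * t ^ (-α) := by
      rw [hFdef]; simp [abs_mul, abs_of_pos (Real.rpow_pos_of_pos ht (-α))]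
    rw [this]
    calc |u (x - t) - u x| * t ^ (-α) ≤ (M' * t) * t ^ (-α) := by
          gcongr
      _ = M' * t ^ (1-α) := by
          rw [mul_assoc]
          congr 1
          rw [show (1:ℝ) - α = 1 + -α by ring, Real.rpow_add ht, Real.rpow_one]
  have hF_bound_big : ∀ t : ℝ, 0 < t → |F t| ≤ (2*M) * t ^ (-α) := by
    intro t ht
    have h2 : |u (x - t) - u x| ≤ 2 * M := by
      calc |u (x - t) - u x| ≤ |u (x - t)| + |u x| := abs_sub _ _
        _ ≤ M + M := add_le_add (hM _) (hM _)
        _ = 2 * M := by ring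
    have : |F t| = |u (x - t) - u x| * t ^ (-α) := by
      rw [hFdef]; simp [abs_mul, abs_of_pos (Real.rpow_pos_of_pos ht (-α))]
    rw [this]
    gcongr
  -- the key identity for each fixed R
  have key : ∀ R : ℝ, 0 < R →
      ∫ z in Ioc (0:ℝ) R, f z = -(F R) - α * ∫ z in Ioc (0:ℝ) R, c z := by
    intro R hR
    set φ : ℝ → ℝ := fun t =>
      -(deriv u (x - t)) * t ^ (-α) + (u (x - t) - u x) * (-α * t ^ (-α - 1)) with hφdef
    -- pointwise relation for t > 0
    have hpt : ∀ t : ℝ, 0 < t → f t = -φ t - α * c t := by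
      intro t ht
      have h1 : t ^ (-α) = (t ^ α)⁻¹ := Real.rpow_neg ht.le α
      have h2 : t ^ (-α - 1) = (t ^ (1+α))⁻¹ := by
        rw [show -α - 1 = -(1+α) by ring, Real.rpow_neg ht.le]
      rw [hfdef, hφdef, hcdef]
      simp only
      rw [h1, h2, div_eq_mul_inv, div_eq_mul_inv]
      ring
    -- derivative of F
    have hderiv : ∀ t : ℝ, 0 < t → HasDerivAt F (φ t) t := by
      intro t ht
      have h1 : HasDerivAt (fun z : ℝ => u (x - z) - u x) (-(deriv u (x - t))) t := by
        have hinner : HasDerivAt (fun z : ℝ => x - z) (-1) t := by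
          simpa using (hasDerivAt_id t).const_sub x
        have := ((hud (x - t)).hasDerivAt.comp t hinner).sub_const (u x)
        simpa [mul_comm] using this
      have h2 : HasDerivAt (fun z : ℝ => z ^ (-α)) (-α * t ^ (-α - 1)) t :=
        Real.hasDerivAt_rpow_const (Or.inl (ne_of_gt ht))
      exact h1.mul h2
    -- FTC on [ε, R] for ε ∈ Ioo 0 R
    have hFTC : ∀ ε ∈ Ioo (0:ℝ) R, ∫ t in ε..R, φ t = F R - F ε := by
      intro ε hε
      have hεR : ε ≤ R := hε.2.le
      have hsub : uIcc ε R ⊆ Ioi 0 := by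
        rw [uIcc_of_le hεR]
        intro t ht
        exact lt_of_lt_of_le hε.1 ht.1
      apply intervalIntegral.integral_eq_sub_of_hasDerivAt
      · intro t ht
        exact hderiv t (hsub ht)
      · apply ContinuousOn.intervalIntegrable
        apply ContinuousOn.add
        · apply ContinuousOn.mul
          · exact ((hucd.comp (continuous_const.sub continuous_id)).neg).continuousOn
          · intro t ht
            exact (Real.continuousAt_rpow_const t (-α)
              (Or.inl (ne_of_gt (hsub ht)))).continuousWithinAt
        · apply ContinuousOn.mul
          · exact ((hu.continuous.comp (continuous_const.sub continuous_id)).sub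
              continuous_const).continuousOn
          · apply ContinuousOn.mul continuousOn_const
            intro t ht
            exact (Real.continuousAt_rpow_const t (-α-1)
              (Or.inl (ne_of_gt (hsub ht)))).continuousWithinAt
    -- interval integrability of f and c on subintervals of (0, R]
    have hfII : ∀ ε ∈ Ioo (0:ℝ) R, IntervalIntegrable f volume ε R := by
      intro ε hε
      rw [intervalIntegrable_iff_integrableOn_Ioc_of_le hε.2.le]
      exact (hf_int R).mono_set (Ioc_subset_Ioc_left hε.1.le)
    have hcII : ∀ ε ∈ Ioo (0:ℝ) R, IntervalIntegrable c volume ε R := by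
      intro ε hε
      rw [intervalIntegrable_iff_integrableOn_Ioc_of_le hε.2.le]
      exact (hc_intR R).mono_set (Ioc_subset_Ioc_left hε.1.le)
    -- the identity at level ε
    have hident : ∀ ε ∈ Ioo (0:ℝ) R,
        ∫ t in ε..R, f t = F ε - F R - α * ∫ t in ε..R, c t := by
      intro ε hε
      have hεR : ε ≤ R := hε.2.le
      have hsub : ∀ t ∈ uIcc ε R, (0:ℝ) < t := by
        rw [uIcc_of_le hεR]
        intro t ht
        exact lt_of_lt_of_le hε.1 ht.1
      have e1 : ∫ t in ε..R, f t = ∫ t in ε..R, -(φ t + α * c t) := by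
        apply intervalIntegral.integral_congr
        intro t ht
        rw [hpt t (hsub t ht)]; ring
      have hφII : IntervalIntegrable φ volume ε R := by
        rw [intervalIntegrable_iff_integrableOn_Ioc_of_le hεR]
        have : ∀ᵐ t ∂(volume.restrict (Ioc ε R)), f t = -φ t - α * c t := by
          refine (ae_restrict_iff' measurableSet_Ioc).mpr (ae_of_all _ ?_)
          intro t ht
          exact hpt t (lt_of_lt_of_le hε.1 ht.1.le)
        have hInt : IntegrableOn (fun t => -φ t - α * c t) (Ioc ε R) :=
          ((intervalIntegrable_iff_integrableOn_Ioc_of_le hεR).mp (hfII ε hε)).congr this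
        have hInt2 : IntegrableOn (fun t => -((-φ t - α * c t) + α * c t)) (Ioc ε R) :=
          (hInt.add (((intervalIntegrable_iff_integrableOn_Ioc_of_le hεR).mp
            (hcII ε hε)).const_mul α)).neg
        exact hInt2.congr (ae_of_all _ fun t => by ring)
      rw [e1, intervalIntegral.integral_neg,
        intervalIntegral.integral_add hφII ((hcII ε hε).const_mul α),
        intervalIntegral.integral_const_mul, hFTC ε hε]
      ring
    -- limits as ε → 0⁺ along 𝓝[Ioo 0 R] 0
    set l : Filter ℝ := 𝓝[Ioo (0:ℝ) R] 0 with hldef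
    haveI hlne : l.NeBot := by
      apply mem_closure_iff_nhdsWithin_neBot.mp
      rw [closure_Ioo hR.ne]
      exact ⟨le_refl 0, hR.le⟩
    have hlmem : Ioo (0:ℝ) R ∈ l := self_mem_nhdsWithin
    -- primitive continuity: ∫_{Ioc 0 ε} → 0
    have hprim : ∀ (h : ℝ → ℝ), IntegrableOn h (Ioc 0 R) →
        Tendsto (fun ε => ∫ t in Ioc (0:ℝ) ε, h t) l (𝓝 0) := by
      intro h hint
      have hint' : IntegrableOn h (Icc 0 R) := by
        rwa [integrableOn_Icc_iff_integrableOn_Ioc]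
      have hcont := intervalIntegral.continuousOn_primitive (a := 0) (b := R)
        (μ := volume) hint'
      have h0 : ContinuousWithinAt (fun y => ∫ t in Ioc (0:ℝ) y, h t) (Icc 0 R) 0 :=
        hcont 0 ⟨le_refl 0, hR.le⟩
      have h0' : Tendsto (fun y => ∫ t in Ioc (0:ℝ) y, h t) l
          (𝓝 (∫ t in Ioc (0:ℝ) (0:ℝ), h t)) :=
        h0.tendsto.mono_left (nhdsWithin_mono 0 Ioo_subset_Icc_self)
      simpa using h0'
    -- split: ∫ ε..R = ∫ Ioc 0 R - ∫ Ioc 0 ε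
    have hsplit : ∀ (h : ℝ → ℝ), IntegrableOn h (Ioc 0 R) → ∀ ε ∈ Ioo (0:ℝ) R,
        ∫ t in ε..R, h t = (∫ t in Ioc (0:ℝ) R, h t) - ∫ t in Ioc (0:ℝ) ε, h t := by
      intro h hint ε hε
      have h1 : IntervalIntegrable h volume 0 ε := by
        rw [intervalIntegrable_iff_integrableOn_Ioc_of_le hε.1.le]
        exact hint.mono_set (Ioc_subset_Ioc_right hε.2.le)
      have h2 : IntervalIntegrable h volume ε R := by
        rw [intervalIntegrable_iff_integrableOn_Ioc_of_le hε.2.le]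
        exact hint.mono_set (Ioc_subset_Ioc_left hε.1.le)
      have := intervalIntegral.integral_add_adjacent_intervals h1 h2
      rw [intervalIntegral.integral_of_le hε.1.le, intervalIntegral.integral_of_le hR.le]
          at this
      linarith [this]
    -- Tendsto of LHS
    have hLHS : Tendsto (fun ε => ∫ t in ε..R, f t) l (𝓝 (∫ t in Ioc (0:ℝ) R, f t)) := by
      have := (hprim f (hf_int R))
      have h2 : Tendsto (fun ε => (∫ t in Ioc (0:ℝ) R, f t) - ∫ t in Ioc (0:ℝ) ε, f t) l
          (𝓝 ((∫ t in Ioc (0:ℝ) R, f t) - 0)) := tendsto_const_nhds.sub this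
      rw [sub_zero] at h2
      apply h2.congr'
      filter_upwards [hlmem] with ε hε
      exact (hsplit f (hf_int R) ε hε).symm
    -- Tendsto of RHS
    have hFto0 : Tendsto F l (𝓝 0) := by
      have hb : Tendsto (fun ε : ℝ => M' * ε ^ (1-α)) l (𝓝 (M' * (0:ℝ) ^ (1-α))) := by
        apply Tendsto.const_mul
        have : ContinuousAt (fun ε : ℝ => ε ^ (1-α)) 0 :=
          Real.continuousAt_rpow_const 0 (1-α) (Or.inr (by linarith))
        exact this.tendsto.mono_left nhdsWithin_le_nhds
      rw [Real.zero_rpow (by linarith : (1:ℝ) - α ≠ 0), mul_zero] at hb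
      apply squeeze_zero_norm' _ hb
      filter_upwards [hlmem] with ε hε
      simpa [Real.norm_eq_abs] using hF_bound_small ε hε.1
    have hRHS : Tendsto (fun ε => F ε - F R - α * ∫ t in ε..R, c t) l
        (𝓝 (0 - F R - α * ∫ t in Ioc (0:ℝ) R, c t)) := by
      apply Tendsto.sub
      · exact hFto0.sub tendsto_const_nhds
      · apply Tendsto.const_mul
        have := hprim c (hc_intR R)
        have h2 : Tendsto (fun ε => (∫ t in Ioc (0:ℝ) R, c t) - ∫ t in Ioc (0:ℝ) ε, c t) l
            (𝓝 ((∫ t in Ioc (0:ℝ) R, c t) - 0)) := tendsto_const_nhds.sub this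
        rw [sub_zero] at h2
        apply h2.congr'
        filter_upwards [hlmem] with ε hε
        exact (hsplit c (hc_intR R) ε hε).symm
    have : Tendsto (fun ε => ∫ t in ε..R, f t) l
        (𝓝 (0 - F R - α * ∫ t in Ioc (0:ℝ) R, c t)) := by
      apply hRHS.congr'
      filter_upwards [hlmem] with ε hε
      exact (hident ε hε).symm
    have := tendsto_nhds_unique hLHS this
    rw [this]; ring
  -- gamma facts
  have hαne : α ≠ 0 := ne_of_gt hα0
  have hΓne : Real.Gamma (-α) ≠ 0 := by
    apply Real.Gamma_ne_zero
    intro m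
    cases m with
    | zero => simpa using hαne
    | succ n =>
      intro hcon
      have h1 : α = (n:ℝ) + 1 := by
        have h2 := neg_injective hcon
        push_cast at h2
        linarith
      have h3 : (0:ℝ) ≤ (n:ℝ) := Nat.cast_nonneg n
      linarith
  have hΓrel : Real.Gamma (1 - α) = -α * Real.Gamma (-α) := by
    have := Real.Gamma_add_one (s := -α) (by simpa using hαne)
    rw [show -α + 1 = 1 - α by ring] at this
    exact this
  have hΓ1ne : Real.Gamma (1 - α) ≠ 0 := by
    rw [hΓrel]
    exact mul_ne_zero (by simpa using hαne) hΓne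
  -- change of variables: ∫_{Iio 0} g = ∫_{Ioi 0} c
  have hchg : ∫ z in Iio (0:ℝ), g z = ∫ z in Ioi (0:ℝ), c z := by
    have h1 : (∫ z in Ioi (0:ℝ), g (-z)) = ∫ z in Iic (-(0:ℝ)), g z :=
      integral_comp_neg_Ioi 0 g
    have h2 : ∀ z ∈ Ioi (0:ℝ), g (-z) = c z := by
      intro z hz
      rw [hgdef, hcdef]
      simp only
      rw [abs_neg, abs_of_pos hz]
      ring_nf
    rw [← setIntegral_congr_fun measurableSet_Ioi h2, h1]
    simp only [neg_zero]
    exact (integral_Iic_eq_integral_Iio).symm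
  -- limits as R → ∞
  have hFatTop : Tendsto F atTop (𝓝 0) := by
    have hb : Tendsto (fun R : ℝ => (2*M) * R ^ (-α)) atTop (𝓝 ((2*M) * 0)) :=
      (tendsto_rpow_neg_atTop hα0).const_mul (2*M)
    rw [mul_zero] at hb
    apply squeeze_zero_norm' _ hb
    filter_upwards [eventually_gt_atTop (0:ℝ)] with R hR
    simpa [Real.norm_eq_abs] using hF_bound_big R hR
  have hcatTop : Tendsto (fun R => ∫ z in Ioc (0:ℝ) R, c z) atTop
      (𝓝 (∫ z in Ioi (0:ℝ), c z)) := by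
    have := intervalIntegral_tendsto_integral_Ioi 0 hc_int tendsto_id
    apply this.congr'
    filter_upwards [eventually_ge_atTop (0:ℝ)] with R hR
    exact intervalIntegral.integral_of_le hR
  -- assemble
  have hmain : Tendsto (fun R => (1 / Real.Gamma (1 - α)) * (-(F R) - α * ∫ z in Ioc (0:ℝ) R, c z))
      atTop (𝓝 ((1 / Real.Gamma (1 - α)) * (-(0:ℝ) - α * ∫ z in Ioi (0:ℝ), c z))) :=
    (Tendsto.sub hFatTop.neg (hcatTop.const_mul α)).const_mul _
  have hconst : (1 / Real.Gamma (1 - α)) * (-(0:ℝ) - α * ∫ z in Ioi (0:ℝ), c z)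
      = (1 / Real.Gamma (-α)) * ∫ z in Iio (0:ℝ), g z := by
    rw [hchg, hΓrel]
    field_simp
    ring
  rw [← hconst]
  apply hmain.congr'
  filter_upwards [eventually_gt_atTop (0:ℝ)] with R hR
  rw [key R hR]
end

section
/- Let α ∈ (0,1), let u : ℝ → ℝ be twice continuously differentiable with u, u', u'' bounded, and let x ∈ ℝ. Then (1/Γ(−1−α)) ∫_{0}^{∞} (u(x−z) − u(x) + u'(x)·z)/z^{2+α} dz = (1/Γ(−α)) ∫_{0}^{∞} (u'(x−z) − u'(x))/z^{1+α} dz. -/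
open MeasureTheory Set Filter Topology

-- helper: integrability on Ioi 0 from bounds near 0 and at infinity
lemma my_integrableOn_helper {g : ℝ → ℝ} (hg : ContinuousOn g (Ioi 0))
    {a b : ℝ} (ha : -1 < a) (hb : b < -1) {A B : ℝ}
    (h0 : ∀ z ∈ Ioc (0:ℝ) 1, |g z| ≤ A * z ^ a)
    (hinf : ∀ z ∈ Ioi (1:ℝ), |g z| ≤ B * z ^ b) :
    IntegrableOn g (Ioi (0:ℝ)) := by
  have hI1 : IntegrableOn g (Ioc (0:ℝ) 1) := by
    refine Integrable.mono' (((intervalIntegral.intervalIntegrable_rpow' ha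
      (a := 0) (b := 1)).1).const_mul A)
      ((hg.mono Ioc_subset_Ioi_self).aestronglyMeasurable measurableSet_Ioc) ?_
    filter_upwards [ae_restrict_mem measurableSet_Ioc] with z hz
    simpa [Real.norm_eq_abs] using h0 z hz
  have hI2 : IntegrableOn g (Ioi (1:ℝ)) := by
    refine Integrable.mono' ((integrableOn_Ioi_rpow_of_lt hb one_pos).const_mul B)
      ((hg.mono (Ioi_subset_Ioi zero_le_one)).aestronglyMeasurable measurableSet_Ioi) ?_
    filter_upwards [ae_restrict_mem measurableSet_Ioi] with z hz
    simpa [Real.norm_eq_abs] using hinf z hz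
  have := hI1.union hI2
  rwa [Ioc_union_Ioi_eq_Ioi zero_le_one] at this

/-- For `α ∈ (0,1)`, `u : ℝ → ℝ` C² with `u`, `u'`, `u''` bounded, and `x ∈ ℝ`,
`(1/Γ(−1−α)) ∫_{0}^{∞} (u(x−z) − u(x) + u'(x)·z)/z^{2+α} dz
  = (1/Γ(−α)) ∫_{0}^{∞} (u'(x−z) − u'(x))/z^{1+α} dz`. -/
theorem xDax_repr
    (α : ℝ) (hα : α ∈ Set.Ioo (0:ℝ) 1)
    (u : ℝ → ℝ) (hu : ContDiff ℝ 2 u)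
    (hub : ∃ M, ∀ y, |u y| ≤ M)
    (hub' : ∃ M, ∀ y, |deriv u y| ≤ M)
    (hub'' : ∃ M, ∀ y, |deriv (deriv u) y| ≤ M)
    (x : ℝ) :
    (1 / Real.Gamma (-1 - α)) *
        (∫ z in Ioi (0:ℝ), (u (x - z) - u x + deriv u x * z) / z ^ (2 + α))
      = (1 / Real.Gamma (-α)) *
        (∫ z in Ioi (0:ℝ), (deriv u (x - z) - deriv u x) / z ^ (1 + α)) := by
  
  obtain ⟨hα0, hα1⟩ := hα
  obtain ⟨M₀, hM₀⟩ := hub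
  obtain ⟨M₁, hM₁⟩ := hub'
  obtain ⟨M₂, hM₂⟩ := hub''
  have hM₀0 : 0 ≤ M₀ := (abs_nonneg _).trans (hM₀ x)
  have hM₁0 : 0 ≤ M₁ := (abs_nonneg _).trans (hM₁ x)
  have hM₂0 : 0 ≤ M₂ := (abs_nonneg _).trans (hM₂ x)
  -- differentiability facts
  have hud : Differentiable ℝ u := hu.differentiable (by norm_num)
  have hu1 : ContDiff ℝ 1 (deriv u) := by
    have : ContDiff ℝ ((1 : ℕ) + 1) u := by exact_mod_cast hu
    exact ((contDiff_succ_iff_deriv.mp this).2.2 : ContDiff ℝ (1:ℕ) (deriv u))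
  have hud' : Differentiable ℝ (deriv u) := hu1.differentiable (by norm_num)
  have hcu' : Continuous (deriv u) := hud'.continuous
  -- Lipschitz bound on deriv u
  have hL : ∀ a b : ℝ, a ≤ b → |deriv u b - deriv u a| ≤ M₂ * (b - a) := by
    intro a b hab
    have := norm_image_sub_le_of_norm_deriv_le_segment'
      (f := deriv u) (f' := deriv (deriv u)) (a := a) (b := b)
      (fun t _ => ((hud' t).hasDerivAt).hasDerivWithinAt)
      (fun t _ => by simpa [Real.norm_eq_abs] using hM₂ t) b (right_mem_Icc.mpr hab)
    simpa [Real.norm_eq_abs] using this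
  -- the function f and its derivative
  set f : ℝ → ℝ := fun z => u (x - z) - u x + deriv u x * z with hf_def
  have hfd : ∀ z : ℝ, HasDerivAt f (deriv u x - deriv u (x - z)) z := by
    intro z
    have h1 : HasDerivAt (fun z : ℝ => x - z) (-1) z := by
      simpa using (hasDerivAt_id z).const_sub x
    have h2 : HasDerivAt (fun z : ℝ => u (x - z)) (deriv u (x - z) * (-1)) z :=
      (hud (x - z)).hasDerivAt.comp z h1
    have h3 : HasDerivAt f (deriv u (x - z) * (-1) + deriv u x * 1) z :=
      (h2.sub_const (u x)).add ((hasDerivAt_id z).const_mul (deriv u x))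
    convert h3 using 1; ring
  have hf0 : f 0 = 0 := by simp [hf_def]
  -- quadratic bound near 0
  have hfq : ∀ z : ℝ, 0 ≤ z → |f z| ≤ M₂ * z ^ (2:ℕ) := by
    intro z hz
    have := norm_image_sub_le_of_norm_deriv_le_segment'
      (f := f) (f' := fun w => deriv u x - deriv u (x - w)) (a := 0) (b := z) (C := M₂ * z)
      (fun w _ => (hfd w).hasDerivWithinAt)
      (fun w hw => by
        have h1 : |deriv u x - deriv u (x - w)| ≤ M₂ * w := by
          have := hL (x - w) x (by linarith [hw.1])
          simpa using this
        simpa [Real.norm_eq_abs] using h1.trans (by nlinarith [hw.1, hw.2])) z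
      (right_mem_Icc.mpr hz)
    rw [hf0, sub_zero, Real.norm_eq_abs] at this
    calc |f z| ≤ M₂ * z * (z - 0) := this
      _ = M₂ * z ^ (2:ℕ) := by ring
  -- linear bound everywhere
  have hflin : ∀ z : ℝ, |f z| ≤ 2 * M₀ + M₁ * |z| := by
    intro z
    have : |f z| ≤ |u (x - z)| + |u x| + |deriv u x| * |z| := by
      calc |f z| ≤ |u (x - z) - u x| + |deriv u x * z| := abs_add_le _ _
        _ ≤ (|u (x - z)| + |u x|) + |deriv u x| * |z| := by
            gcongr
            · exact abs_sub _ _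
            · rw [abs_mul]
    have h1 := hM₀ (x - z); have h2 := hM₀ x; have h3 := hM₁ x
    have h4 : |deriv u x| * |z| ≤ M₁ * |z| := by
      exact mul_le_mul_of_nonneg_right h3 (abs_nonneg _)
    linarith
  -- bound on the derivative difference
  have hvq : ∀ z : ℝ, 0 ≤ z → |deriv u (x - z) - deriv u x| ≤ M₂ * z := by
    intro z hz
    have := hL (x - z) x (by linarith)
    rw [abs_sub_comm] at this
    simpa using this
  have hvb : ∀ z : ℝ, |deriv u (x - z) - deriv u x| ≤ 2 * M₁ := by
    intro z
    have h1 := hM₁ (x - z); have h2 := hM₁ x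
    calc |deriv u (x - z) - deriv u x| ≤ |deriv u (x - z)| + |deriv u x| := abs_sub _ _
      _ ≤ 2 * M₁ := by linarith
  -- continuity of the two integrands
  have hfc : Continuous f := by
    rw [hf_def]
    exact ((hud.continuous.comp (continuous_const.sub continuous_id)).sub
      continuous_const).add (continuous_const.mul continuous_id)
  have hvc : Continuous (fun z : ℝ => deriv u (x - z) - deriv u x) :=
    (hcu'.comp (continuous_const.sub continuous_id)).sub continuous_const
  have hrpowc : ∀ p : ℝ, ContinuousOn (fun z : ℝ => z ^ p) (Ioi 0) := fun p =>
    continuousOn_id.rpow_const fun z hz => Or.inl (ne_of_gt hz)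
  have hrpne : ∀ p : ℝ, ∀ z ∈ Ioi (0:ℝ), z ^ p ≠ 0 := fun p z hz =>
    (Real.rpow_pos_of_pos hz p).ne'
  -- integrability of integrand 1
  have h1int : IntegrableOn (fun z => f z / z ^ (2 + α)) (Ioi (0:ℝ)) := by
    refine my_integrableOn_helper
      (ContinuousOn.div hfc.continuousOn (hrpowc _) (hrpne _))
      (show (-1:ℝ) < -α by linarith) (show -(1+α) < (-1:ℝ) by linarith)
      (A := M₂) (B := 2 * M₀ + M₁) ?_ ?_
    · intro z hz
      have hz0 : (0:ℝ) < z := hz.1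
      have hp : (0:ℝ) < z ^ (2 + α) := Real.rpow_pos_of_pos hz0 _
      rw [abs_div, abs_of_pos hp, div_le_iff₀ hp]
      have he : z ^ (-α) * z ^ (2 + α) = z ^ (2:ℕ) := by
        rw [← Real.rpow_add hz0, ← Real.rpow_natCast z 2]
        norm_num
      calc |f z| ≤ M₂ * z ^ (2:ℕ) := hfq z hz0.le
        _ = M₂ * z ^ (-α) * z ^ (2 + α) := by rw [mul_assoc, he]
    · intro z hz
      have hz1 : (1:ℝ) < z := hz
      have hz0 : (0:ℝ) < z := by linarith
      have hp : (0:ℝ) < z ^ (2 + α) := Real.rpow_pos_of_pos hz0 _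
      rw [abs_div, abs_of_pos hp, div_le_iff₀ hp]
      have he : z ^ (-(1+α)) * z ^ (2 + α) = z := by
        rw [← Real.rpow_add hz0, show -(1+α) + (2+α) = 1 by ring, Real.rpow_one]
      calc |f z| ≤ 2 * M₀ + M₁ * |z| := hflin z
        _ ≤ (2 * M₀ + M₁) * z := by rw [abs_of_pos hz0]; nlinarith
        _ = (2 * M₀ + M₁) * z ^ (-(1+α)) * z ^ (2 + α) := by rw [mul_assoc, he]
  -- integrability of integrand 2
  have h2int : IntegrableOn
      (fun z => (deriv u (x - z) - deriv u x) / z ^ (1 + α)) (Ioi (0:ℝ)) := by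
    refine my_integrableOn_helper
      (ContinuousOn.div hvc.continuousOn (hrpowc _) (hrpne _))
      (show (-1:ℝ) < -α by linarith) (show -(1+α) < (-1:ℝ) by linarith)
      (A := M₂) (B := 2 * M₁) ?_ ?_
    · intro z hz
      have hz0 : (0:ℝ) < z := hz.1
      have hp : (0:ℝ) < z ^ (1 + α) := Real.rpow_pos_of_pos hz0 _
      rw [abs_div, abs_of_pos hp, div_le_iff₀ hp]
      have he : z ^ (-α) * z ^ (1 + α) = z := by
        rw [← Real.rpow_add hz0, show -α + (1+α) = 1 by ring, Real.rpow_one]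
      calc |deriv u (x - z) - deriv u x| ≤ M₂ * z := hvq z hz0.le
        _ = M₂ * (z ^ (-α) * z ^ (1 + α)) := by rw [he]
        _ = M₂ * z ^ (-α) * z ^ (1 + α) := by ring
    · intro z hz
      have hz1 : (1:ℝ) < z := hz
      have hz0 : (0:ℝ) < z := by linarith
      have hp : (0:ℝ) < z ^ (1 + α) := Real.rpow_pos_of_pos hz0 _
      rw [abs_div, abs_of_pos hp, div_le_iff₀ hp]
      have he : z ^ (-(1+α)) * z ^ (1 + α) = 1 := by
        rw [← Real.rpow_add hz0, show -(1+α) + (1+α) = 0 by ring, Real.rpow_zero]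
      calc |deriv u (x - z) - deriv u x| ≤ 2 * M₁ := hvb z
        _ = 2 * M₁ * (z ^ (-(1+α)) * z ^ (1 + α)) := by rw [he]; ring
        _ = 2 * M₁ * z ^ (-(1+α)) * z ^ (1 + α) := by ring
  -- the auxiliary function for integration by parts
  set g : ℝ → ℝ := fun z => f z * z ^ (-(1+α)) with hg_def
  set G' : ℝ → ℝ := fun z =>
    (deriv u x - deriv u (x - z)) * z ^ (-(1+α)) + f z * (-(1+α) * z ^ (-(1+α) - 1))
    with hG'_def
  have hg0 : g 0 = 0 := by
    rw [hg_def]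
    simp [hf0]
  have hgd : ∀ z ∈ Ioi (0:ℝ), HasDerivAt g (G' z) z := fun z hz =>
    (hfd z).mul (Real.hasDerivAt_rpow_const (Or.inl (ne_of_gt hz)))
  -- G' equals the combination of the two integrands on Ioi 0
  have g'eq : ∀ z ∈ Ioi (0:ℝ), G' z
      = -((deriv u (x - z) - deriv u x) / z ^ (1 + α))
        - (1 + α) * (f z / z ^ (2 + α)) := by
    intro z hz
    have hz0 : (0:ℝ) < z := hz
    have h1 : z ^ (1 + α) ≠ 0 := (Real.rpow_pos_of_pos hz0 _).ne'
    have h2 : z ^ (2 + α) ≠ 0 := (Real.rpow_pos_of_pos hz0 _).ne'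
    rw [hG'_def]
    simp only
    rw [show -(1+α) - 1 = -(2+α) by ring, Real.rpow_neg hz0.le (1+α),
      Real.rpow_neg hz0.le (2+α)]
    field_simp
    ring
  -- continuity at 0 from the right
  have hcont0 : ContinuousWithinAt g (Ici (0:ℝ)) 0 := by
    rw [ContinuousWithinAt, hg0]
    apply squeeze_zero_norm' (a := fun z => M₂ * z ^ (1 - α))
    · filter_upwards [self_mem_nhdsWithin] with z (hz : (0:ℝ) ≤ z)
      rcases hz.eq_or_lt with h|h
      · rw [hg_def]
        simp [← h, hf0, Real.zero_rpow (show 1 - α ≠ 0 by linarith)]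
      · rw [hg_def]
        simp only [Real.norm_eq_abs, abs_mul]
        rw [abs_of_pos (Real.rpow_pos_of_pos h _)]
        have he : ((2:ℕ):ℝ) + -(1+α) = 1 - α := by push_cast; ring
        calc |f z| * z ^ (-(1+α)) ≤ M₂ * z ^ (2:ℕ) * z ^ (-(1+α)) :=
              mul_le_mul_of_nonneg_right (hfq z h.le) (Real.rpow_nonneg h.le _)
          _ = M₂ * z ^ (1 - α) := by
              rw [mul_assoc, ← Real.rpow_natCast z 2, ← Real.rpow_add h, he]
    · have h1 : Tendsto (fun z : ℝ => z ^ (1 - α)) (𝓝 0) (𝓝 ((0:ℝ) ^ (1 - α))) :=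
        (Real.continuousAt_rpow_const 0 (1 - α) (Or.inr (by linarith)))
      rw [Real.zero_rpow (show 1 - α ≠ 0 by linarith)] at h1
      have h2 : Tendsto (fun z : ℝ => M₂ * z ^ (1 - α)) (𝓝 0) (𝓝 (M₂ * 0)) :=
        h1.const_mul M₂
      rw [mul_zero] at h2
      exact h2.mono_left nhdsWithin_le_nhds
  -- limit at infinity
  have htop : Tendsto g atTop (𝓝 0) := by
    apply squeeze_zero_norm' (a := fun z => 2 * M₀ * z ^ (-(1+α)) + M₁ * z ^ (-α))
    · filter_upwards [eventually_ge_atTop (1:ℝ)] with z hz1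
      have hz0 : (0:ℝ) < z := lt_of_lt_of_le one_pos hz1
      rw [hg_def]
      simp only [Real.norm_eq_abs, abs_mul]
      rw [abs_of_pos (Real.rpow_pos_of_pos hz0 _)]
      have h1 : |f z| ≤ 2 * M₀ + M₁ * z := by
        have := hflin z; rwa [abs_of_pos hz0] at this
      have h2 : z * z ^ (-(1+α)) = z ^ (-α) := by
        nth_rewrite 1 [← Real.rpow_one z]
        rw [← Real.rpow_add hz0]
        congr 1; ring
      calc |f z| * z ^ (-(1+α)) ≤ (2 * M₀ + M₁ * z) * z ^ (-(1+α)) :=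
            mul_le_mul_of_nonneg_right h1 (Real.rpow_nonneg hz0.le _)
        _ = 2 * M₀ * z ^ (-(1+α)) + M₁ * z ^ (-α) := by
            rw [add_mul, mul_assoc M₁, h2]
    · have h1 := (tendsto_rpow_neg_atTop (show (0:ℝ) < 1 + α by linarith)).const_mul (2 * M₀)
      have h2 := (tendsto_rpow_neg_atTop hα0).const_mul M₁
      simpa using h1.add h2
  -- integrability of G'
  have hA : Integrable (fun z => -((deriv u (x - z) - deriv u x) / z ^ (1 + α)))
      (volume.restrict (Ioi 0)) := h2int.neg
  have hB : Integrable (fun z => (1 + α) * (f z / z ^ (2 + α)))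
      (volume.restrict (Ioi 0)) := h1int.const_mul _
  have hG'int : IntegrableOn G' (Ioi (0:ℝ)) := by
    refine MeasureTheory.IntegrableOn.congr_fun (hA.sub hB)
      (fun z hz => ?_) measurableSet_Ioi
    exact (g'eq z hz).symm
  -- FTC on (0, ∞)
  have key : ∫ z in Ioi (0:ℝ), G' z = 0 := by
    rw [integral_Ioi_of_hasDerivAt_of_tendsto hcont0 hgd hG'int htop, hg0, sub_zero]
  have hsplit : ∫ z in Ioi (0:ℝ), G' z
      = -(∫ z in Ioi (0:ℝ), (deriv u (x - z) - deriv u x) / z ^ (1 + α))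
        - (1 + α) * ∫ z in Ioi (0:ℝ), f z / z ^ (2 + α) := by
    rw [setIntegral_congr_fun measurableSet_Ioi (fun z hz => g'eq z hz)]
    rw [integral_sub hA hB, integral_neg, integral_const_mul]
  have hI2 : (∫ z in Ioi (0:ℝ), (deriv u (x - z) - deriv u x) / z ^ (1 + α))
      = -((1 + α) * ∫ z in Ioi (0:ℝ), f z / z ^ (2 + α)) := by
    have := hsplit.symm.trans key
    linarith
  -- Gamma recurrence
  have hGamma : Real.Gamma (-α) = (-1 - α) * Real.Gamma (-1 - α) := by
    have h := Real.Gamma_add_one (show (-1 - α : ℝ) ≠ 0 by linarith)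
    rwa [show (-1 - α) + 1 = -α by ring] at h
  have hne1 : Real.Gamma (-1 - α) ≠ 0 := by
    refine Real.Gamma_ne_zero fun m => ?_
    intro hm
    rcases Nat.lt_or_ge m 2 with h|h
    · have : (m:ℝ) ≤ 1 := by exact_mod_cast Nat.lt_succ_iff.mp h
      linarith
    · have : (2:ℝ) ≤ (m:ℝ) := by exact_mod_cast h
      linarith
  -- conclude
  simp only [hf_def] at hI2 ⊢
  rw [hI2, hGamma]
  have hden : (-1 - α) ≠ 0 := by linarith
  generalize (∫ z in Ioi (0:ℝ), (u (x - z) - u x + deriv u x * z) / z ^ (2 + α)) = c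
  field_simp
  ring
end

section
/- Let α ∈ (0,1), let u : ℝ → ℝ be twice continuously differentiable with u, u', u'' bounded, and let x ∈ ℝ. Then (1/Γ(−α)) ∫_{0}^{∞} (u'(x−z) − u'(x))/z^{1+α} dz = (1/Γ(1−α)) · lim_{R→∞} ∫_{0}^{R} u''(x−z)/z^{α} dz; in particular the improper integral on the right converges. -/
open MeasureTheory Set Filter Topology

/-- For `α ∈ (0,1)`, `u : ℝ → ℝ` C² with `u`, `u'`, `u''` bounded, and `x ∈ ℝ`,
`(1/Γ(−α)) ∫_{0}^{∞} (u'(x−z) − u'(x))/z^{1+α} dz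
  = (1/Γ(1−α)) · lim_{R→∞} ∫_{0}^{R} u''(x−z)/z^{α} dz`,
the improper integral on the right converging to the stated value. -/
theorem xDax_repr_second
    (α : ℝ) (hα : α ∈ Set.Ioo (0:ℝ) 1)
    (u : ℝ → ℝ) (hu : ContDiff ℝ 2 u)
    (hub : ∃ M, ∀ y, |u y| ≤ M)
    (hub' : ∃ M, ∀ y, |deriv u y| ≤ M)
    (hub'' : ∃ M, ∀ y, |deriv (deriv u) y| ≤ M)
    (x : ℝ) :
    Tendsto
      (fun R : ℝ => (1 / Real.Gamma (1 - α)) *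
        ∫ z in Ioc (0:ℝ) R, deriv (deriv u) (x - z) / z ^ α)
      atTop
      (𝓝 ((1 / Real.Gamma (-α)) *
        ∫ z in Ioi (0:ℝ), (deriv u (x - z) - deriv u x) / z ^ (1 + α))) := by
  obtain ⟨hα0, hα1⟩ := hα
  obtain ⟨M1, hM1⟩ := hub'
  obtain ⟨M2, hM2⟩ := hub''
  have hM1nn : 0 ≤ M1 := le_trans (abs_nonneg _) (hM1 0)
  have hM2nn : 0 ≤ M2 := le_trans (abs_nonneg _) (hM2 0)
  -- smoothness facts
  have hu1 : ContDiff ℝ 1 (deriv u) := by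
    have : ContDiff ℝ (1 + 1) u := by exact_mod_cast hu
    exact (contDiff_succ_iff_deriv.mp this).2.2
  have hdiff' : Differentiable ℝ (deriv u) := hu1.differentiable one_ne_zero
  have hcont' : Continuous (deriv u) := hdiff'.continuous
  have hcont'' : Continuous (deriv (deriv u)) :=
    (contDiff_one_iff_deriv.mp hu1).2
  set g : ℝ → ℝ := fun z => deriv u (x - z) - deriv u x with hgdef
  have hgcont : Continuous g := by
    exact (hcont'.comp (continuous_const.sub continuous_id)).sub continuous_const
  have hcontU : Continuous fun z => deriv (deriv u) (x - z) :=
    hcont''.comp (continuous_const.sub continuous_id)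
  -- Lipschitz-type bound: |g z| ≤ M2 * |z|
  have hgl : ∀ z, |g z| ≤ M2 * |z| := by
    intro z
    have := Convex.norm_image_sub_le_of_norm_deriv_le (s := univ)
      (fun y _ => hdiff' y) (fun y _ => hM2 y) convex_univ (mem_univ x) (mem_univ (x - z))
    show |deriv u (x - z) - deriv u x| ≤ M2 * |z|
    simpa [Real.norm_eq_abs] using this
  have hgb : ∀ z, |g z| ≤ 2 * M1 := by
    intro z
    calc |g z| ≤ |deriv u (x - z)| + |deriv u x| := abs_sub _ _
    _ ≤ M1 + M1 := add_le_add (hM1 _) (hM1 _)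
    _ = 2 * M1 := by ring
  -- derivative of g
  have hgderiv : ∀ z : ℝ, HasDerivAt g (-(deriv (deriv u) (x - z))) z := by
    intro z
    have h1 : HasDerivAt (fun y : ℝ => x - y) (-1) z := (hasDerivAt_id z).const_sub x
    have h2 := ((hdiff' (x - z)).hasDerivAt).comp z h1
    rw [hgdef]
    simpa [mul_comm] using h2.sub_const (deriv u x)
  set h : ℝ → ℝ := fun z => g z * z ^ (-α) with hhdef
  set φ : ℝ → ℝ := fun z =>
    -(deriv (deriv u) (x - z) / z ^ α) - α * (g z / z ^ (1 + α)) with hφdef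
  -- derivative of h on (0, ∞)
  have hhderiv : ∀ z : ℝ, 0 < z → HasDerivAt h (φ z) z := by
    intro z hz
    have hr : HasDerivAt (fun t : ℝ => t ^ (-α)) (-α * z ^ (-α - 1)) z :=
      Real.hasDerivAt_rpow_const (Or.inl hz.ne')
    have := (hgderiv z).mul hr
    refine HasDerivAt.congr_deriv this ?_
    have e1 : z ^ (-α) = (z ^ α)⁻¹ := Real.rpow_neg hz.le α
    have e2 : z ^ (-α - 1) = (z ^ (1 + α))⁻¹ := by
      rw [show -α - 1 = -(1 + α) by ring, Real.rpow_neg hz.le]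
    rw [hφdef, e1, e2]
    field_simp
    ring
  -- integrability of z ↦ u''(x-z)/z^α on Ioc 0 R
  have hIαR : ∀ R : ℝ, IntegrableOn (fun z => deriv (deriv u) (x - z) / z ^ α) (Ioc 0 R) := by
    intro R
    have hrpow : IntegrableOn (fun z : ℝ => z ^ (-α)) (Ioc 0 R) :=
      (intervalIntegral.intervalIntegrable_rpow' (by linarith : (-1:ℝ) < -α)).1
    have hmul : IntegrableOn (fun z => deriv (deriv u) (x - z) * z ^ (-α)) (Ioc 0 R) := by
      refine hrpow.bdd_mul (c := M2) ?_ (Filter.Eventually.of_forall fun z => ?_)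
      · exact (hcontU.aestronglyMeasurable).restrict
      · simpa [Real.norm_eq_abs] using hM2 (x - z)
    refine hmul.congr_fun (fun z hz => ?_) measurableSet_Ioc
    beta_reduce
    rw [Real.rpow_neg hz.1.le, mul_comm, inv_mul_eq_div]
  -- integrability of z ↦ g z / z^(1+α) on Ioi 0
  have hmeasG : AEStronglyMeasurable (fun z : ℝ => g z / z ^ (1 + α)) (volume : Measure ℝ) := by
    exact (hgcont.measurable.div
      (Real.continuous_rpow_const (by linarith : (0:ℝ) ≤ 1 + α)).measurable).aestronglyMeasurable
  have hI2a : IntegrableOn (fun z => g z / z ^ (1 + α)) (Ioc 0 1) := by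
    have hbd : IntegrableOn (fun z : ℝ => M2 * z ^ (-α)) (Ioc 0 1) :=
      ((intervalIntegral.intervalIntegrable_rpow'
        (by linarith : (-1:ℝ) < -α)).1).const_mul M2
    refine hbd.integrable.mono' hmeasG.restrict ?_
    refine (ae_restrict_iff' measurableSet_Ioc).2 (Filter.Eventually.of_forall fun z hz => ?_)
    have hz0 : 0 < z := hz.1
    have e1 : z ^ (1 + α) = z * z ^ α := by
      rw [Real.rpow_add hz0, Real.rpow_one]
    have hpow_pos : 0 < z ^ α := Real.rpow_pos_of_pos hz0 α
    rw [Real.norm_eq_abs, abs_div, abs_of_pos (by rw [e1]; positivity : (0:ℝ) < z ^ (1+α))]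
    rw [Real.rpow_neg hz0.le, e1]
    rw [div_le_iff₀ (by positivity)]
    calc |g z| ≤ M2 * |z| := hgl z
    _ = M2 * z := by rw [abs_of_pos hz0]
    _ = M2 * (z ^ α)⁻¹ * (z * z ^ α) := by field_simp
  have hI2b : IntegrableOn (fun z => g z / z ^ (1 + α)) (Ioi 1) := by
    have hbd : IntegrableOn (fun z : ℝ => 2 * M1 * z ^ (-(1 + α))) (Ioi 1) :=
      (integrableOn_Ioi_rpow_of_lt (by linarith) one_pos).const_mul (2 * M1)
    refine hbd.integrable.mono' hmeasG.restrict ?_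
    refine (ae_restrict_iff' measurableSet_Ioi).2 (Filter.Eventually.of_forall fun z hz => ?_)
    have hz0 : (0:ℝ) < z := lt_trans one_pos hz
    have hpow_pos : 0 < z ^ (1 + α) := Real.rpow_pos_of_pos hz0 _
    rw [Real.norm_eq_abs, abs_div, abs_of_pos hpow_pos, Real.rpow_neg hz0.le,
      div_le_iff₀ hpow_pos, mul_assoc, inv_mul_cancel₀ hpow_pos.ne', mul_one]
    exact hgb z
  have hI2 : IntegrableOn (fun z => g z / z ^ (1 + α)) (Ioi 0) := by
    rw [← Ioc_union_Ioi_eq_Ioi (zero_le_one)]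
    exact hI2a.union hI2b
  -- tendsto of h at 0⁺
  have hh0 : Tendsto h (𝓝[>] (0:ℝ)) (𝓝 0) := by
    have hsq : Tendsto (fun z : ℝ => M2 * z ^ (1 - α)) (𝓝[>] (0:ℝ)) (𝓝 0) := by
      have : Tendsto (fun z : ℝ => z ^ (1 - α)) (𝓝 (0:ℝ)) (𝓝 ((0:ℝ) ^ (1 - α))) :=
        (Real.continuousAt_rpow_const 0 (1 - α) (Or.inr (by linarith)))
      have h0 : ((0:ℝ) ^ (1 - α)) = 0 := Real.zero_rpow (by linarith)
      rw [h0] at this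
      simpa using ((this.mono_left nhdsWithin_le_nhds).const_mul M2)
    refine squeeze_zero_norm' ?_ hsq
    filter_upwards [self_mem_nhdsWithin] with z hz
    have hz0 : (0:ℝ) < z := hz
    have hpownn : (0:ℝ) ≤ z ^ (-α) := (Real.rpow_pos_of_pos hz0 _).le
    rw [Real.norm_eq_abs, hhdef]
    calc |g z * z ^ (-α)| = |g z| * z ^ (-α) := by rw [abs_mul, abs_of_nonneg hpownn]
    _ ≤ M2 * |z| * z ^ (-α) := mul_le_mul_of_nonneg_right (hgl z) hpownn
    _ = M2 * z ^ (1 - α) := by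
        rw [abs_of_pos hz0, show (1:ℝ) - α = 1 + -α by ring, Real.rpow_add hz0,
          Real.rpow_one, mul_assoc]
  -- tendsto of h at ⊤
  have hhtop : Tendsto h atTop (𝓝 0) := by
    have hsq : Tendsto (fun z : ℝ => 2 * M1 * z ^ (-α)) atTop (𝓝 0) := by
      simpa using (tendsto_rpow_neg_atTop hα0).const_mul (2 * M1)
    refine squeeze_zero_norm' ?_ hsq
    filter_upwards [eventually_gt_atTop (0:ℝ)] with z hz
    have hpownn : (0:ℝ) ≤ z ^ (-α) := (Real.rpow_pos_of_pos hz _).le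
    rw [Real.norm_eq_abs, hhdef]
    calc |g z * z ^ (-α)| = |g z| * z ^ (-α) := by rw [abs_mul, abs_of_nonneg hpownn]
    _ ≤ 2 * M1 * z ^ (-α) := mul_le_mul_of_nonneg_right (hgb z) hpownn
  -- the key FTC identity for R > 0
  have hkey : ∀ R : ℝ, 0 < R →
      (∫ z in Ioc (0:ℝ) R, deriv (deriv u) (x - z) / z ^ α)
        = -(h R) - α * ∫ z in Ioc (0:ℝ) R, g z / z ^ (1 + α) := by
    intro R hR
    have hIg : IntegrableOn (fun z => g z / z ^ (1 + α)) (Ioc 0 R) :=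
      hI2.mono_set (Ioc_subset_Ioi_self)
    have hIφ : IntervalIntegrable φ volume 0 R := by
      rw [intervalIntegrable_iff_integrableOn_Ioc_of_le hR.le]
      exact ((hIαR R).neg).sub (hIg.const_mul α)
    have hhR : Tendsto h (𝓝[<] R) (𝓝 (h R)) := by
      have : ContinuousAt h R := by
        refine (hgcont.continuousAt).mul ?_
        exact (Real.continuousAt_rpow_const R (-α) (Or.inl hR.ne'))
      exact this.continuousWithinAt
    have hFTC := intervalIntegral.integral_eq_sub_of_hasDerivAt_of_tendsto hR
      (fun z hz => hhderiv z hz.1) hIφ hh0 hhR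
    rw [intervalIntegral.integral_of_le hR.le] at hFTC
    have hsplit : (∫ z in Ioc (0:ℝ) R, φ z)
        = -(∫ z in Ioc (0:ℝ) R, deriv (deriv u) (x - z) / z ^ α)
          - α * ∫ z in Ioc (0:ℝ) R, g z / z ^ (1 + α) := by
      have hA : IntegrableOn (fun z => -(deriv (deriv u) (x - z) / z ^ α)) (Ioc 0 R) := (hIαR R).neg
      have hB : IntegrableOn (fun z => α * (g z / z ^ (1 + α))) (Ioc 0 R) := hIg.const_mul α
      simp only [hφdef]
      rw [integral_sub hA hB, integral_neg, integral_const_mul]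
    rw [hsplit] at hFTC
    have := hFTC
    linarith [this]
  -- limit of the Ioc integrals of g/z^(1+α)
  have hIoc_tendsto : Tendsto (fun R : ℝ => ∫ z in Ioc (0:ℝ) R, g z / z ^ (1 + α)) atTop
      (𝓝 (∫ z in Ioi (0:ℝ), g z / z ^ (1 + α))) := by
    have := intervalIntegral_tendsto_integral_Ioi 0 hI2 tendsto_id
    refine this.congr' ?_
    filter_upwards [eventually_ge_atTop (0:ℝ)] with R hR
    simp only [id_eq]
    rw [intervalIntegral.integral_of_le hR]
  -- Gamma identity
  have hαne : (-α : ℝ) ≠ 0 := by linarith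
  have hΓ1 : Real.Gamma (1 - α) = -α * Real.Gamma (-α) := by
    have := Real.Gamma_add_one hαne
    rw [show -α + 1 = 1 - α by ring] at this
    exact this
  have hΓpos : 0 < Real.Gamma (1 - α) := Real.Gamma_pos_of_pos (by linarith)
  have hΓne : Real.Gamma (-α) ≠ 0 := by
    intro hc
    rw [hc, mul_zero] at hΓ1
    exact hΓpos.ne' hΓ1
  -- assemble
  have hlim : Tendsto (fun R : ℝ =>
      (1 / Real.Gamma (1 - α)) * (-(h R) - α * ∫ z in Ioc (0:ℝ) R, g z / z ^ (1 + α)))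
      atTop (𝓝 ((1 / Real.Gamma (-α)) * ∫ z in Ioi (0:ℝ), g z / z ^ (1 + α))) := by
    have hmain : Tendsto (fun R : ℝ =>
        -(h R) - α * ∫ z in Ioc (0:ℝ) R, g z / z ^ (1 + α)) atTop
        (𝓝 (-(0:ℝ) - α * ∫ z in Ioi (0:ℝ), g z / z ^ (1 + α))) :=
      (hhtop.neg).sub (hIoc_tendsto.const_mul α)
    have := hmain.const_mul (1 / Real.Gamma (1 - α))
    convert this using 2
    rw [hΓ1]
    field_simp
    ring
  refine hlim.congr' ?_
  filter_upwards [eventually_gt_atTop (0:ℝ)] with R hR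
  rw [hkey R hR]
end

section
/- Let α ∈ (0,1), let u : ℝ → ℝ be twice continuously differentiable with u, u', u'' bounded, and let x ∈ ℝ. Then (1/Γ(−1−α)) ∫_{0}^{∞} (u(x+z) − u(x) − u'(x)·z)/z^{2+α} dz = (1/Γ(1−α)) · lim_{R→∞} ∫_{0}^{R} u''(x+z)/z^{α} dz; in particular the improper integral on the right converges. -/
open MeasureTheory Set Filter Topology

private lemma integrableOn_of_bound' {f g : ℝ → ℝ} {s : Set ℝ} (hs : MeasurableSet s)
    (hg : IntegrableOn g s) (hf : ContinuousOn f s) (h : ∀ z ∈ s, |f z| ≤ g z) :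
    IntegrableOn f s :=
  Integrable.mono' hg (hf.aestronglyMeasurable hs)
    ((ae_restrict_iff' hs).mpr (ae_of_all _ (by simpa [Real.norm_eq_abs] using h)))

private lemma tendsto_zero_of_rpow_bound {f : ℝ → ℝ} {C β : ℝ} (hβ : 0 < β)
    (h : ∀ a ∈ Ioo (0:ℝ) 1, |f a| ≤ C * a ^ β) :
    Tendsto f (𝓝[>] (0:ℝ)) (𝓝 0) := by
  apply squeeze_zero_norm' (a := fun a => C * a ^ β)
  · filter_upwards [Ioo_mem_nhdsGT one_pos] with a ha
    simpa [Real.norm_eq_abs] using h a ha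
  · have h0 : Tendsto (fun a : ℝ => a ^ β) (𝓝[>] (0:ℝ)) (𝓝 0) := by
      have hc : ContinuousAt (fun a : ℝ => a ^ β) 0 :=
        Real.continuousAt_rpow_const 0 β (Or.inr hβ.le)
      have := hc.continuousWithinAt (s := Ioi (0:ℝ))
      simpa [ContinuousWithinAt, Real.zero_rpow hβ.ne'] using this
    simpa using h0.const_mul C

private lemma tendsto_zero_of_rpow_bound_atTop {f : ℝ → ℝ} {C β : ℝ} (hβ : 0 < β)
    (h : ∀ a ∈ Ioi (1:ℝ), |f a| ≤ C * a ^ (-β)) :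
    Tendsto f atTop (𝓝 0) := by
  apply squeeze_zero_norm' (a := fun a => C * a ^ (-β))
  · filter_upwards [eventually_gt_atTop (1:ℝ)] with a ha
    simpa [Real.norm_eq_abs] using h a ha
  · simpa using (tendsto_rpow_neg_atTop hβ).const_mul C


/-- For `α ∈ (0,1)`, `u : ℝ → ℝ` C² with `u`, `u'`, `u''` bounded, and `x ∈ ℝ`,
`(1/Γ(−1−α)) ∫_{0}^{∞} (u(x+z) − u(x) − u'(x)·z)/z^{2+α} dz
  = (1/Γ(1−α)) · lim_{R→∞} ∫_{0}^{R} u''(x+z)/z^{α} dz`,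
the improper integral on the right converging to the stated value. -/
theorem xbarDax_repr
    (α : ℝ) (hα : α ∈ Set.Ioo (0:ℝ) 1)
    (u : ℝ → ℝ) (hu : ContDiff ℝ 2 u)
    (hub : ∃ M, ∀ y, |u y| ≤ M)
    (hub' : ∃ M, ∀ y, |deriv u y| ≤ M)
    (hub'' : ∃ M, ∀ y, |deriv (deriv u) y| ≤ M)
    (x : ℝ) :
    Tendsto
      (fun R : ℝ => (1 / Real.Gamma (1 - α)) *
        ∫ z in Ioc (0:ℝ) R, deriv (deriv u) (x + z) / z ^ α)
      atTop
      (𝓝 ((1 / Real.Gamma (-1 - α)) *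
        ∫ z in Ioi (0:ℝ), (u (x + z) - u x - deriv u x * z) / z ^ (2 + α))) := by
  obtain ⟨hα0, hα1⟩ := hα
  obtain ⟨M₀, hM₀⟩ := hub
  obtain ⟨M₁, hM₁⟩ := hub'
  obtain ⟨M₂, hM₂⟩ := hub''
  have hM₀0 : 0 ≤ M₀ := le_trans (abs_nonneg _) (hM₀ 0)
  have hM₁0 : 0 ≤ M₁ := le_trans (abs_nonneg _) (hM₁ 0)
  have hM₂0 : 0 ≤ M₂ := le_trans (abs_nonneg _) (hM₂ 0)
  -- smoothness facts
  have h1 : ContDiff ℝ (1+1) u := by norm_num [hu]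
  have hud : Differentiable ℝ u := hu.differentiable (by norm_num)
  have h2 : ContDiff ℝ 1 (deriv u) := (contDiff_succ_iff_deriv.mp h1).2.2
  have hud2 : Differentiable ℝ (deriv u) := h2.differentiable one_ne_zero
  have hcw : Continuous (deriv (deriv u)) :=
    ((contDiff_succ_iff_deriv.mp (show ContDiff ℝ (0+1) (deriv u) by
      norm_num [h2])).2.2).continuous
  set v : ℝ → ℝ := fun z => deriv u (x + z) - deriv u x with hv
  set G : ℝ → ℝ := fun z => u (x + z) - u x - deriv u x * z with hG
  set w : ℝ → ℝ := fun z => deriv (deriv u) (x + z) with hw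
  have hd1 : ∀ y, HasDerivAt u (deriv u y) y := fun y => (hud y).hasDerivAt
  have hd2 : ∀ y, HasDerivAt (deriv u) (deriv (deriv u) y) y := fun y => (hud2 y).hasDerivAt
  have hvd : ∀ z, HasDerivAt v (w z) z := by
    intro z
    have h := ((hd2 (x+z)).comp z ((hasDerivAt_id z).const_add x)).sub_const (deriv u x)
    simpa [hw, hv, Function.comp] using h
  have hGd : ∀ z, HasDerivAt G (v z) z := by
    intro z
    have h := (((hd1 (x+z)).comp z ((hasDerivAt_id z).const_add x)).sub_const (u x)).sub
      ((hasDerivAt_id z).const_mul (deriv u x))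
    exact h.congr_deriv (by simp [hv])
  -- bounds
  have hvb2 : ∀ z : ℝ, |v z| ≤ M₂ * |z| := by
    intro z
    have h0 : v 0 = 0 := by simp [hv]
    have := Convex.norm_image_sub_le_of_norm_hasDerivWithin_le (s := (univ : Set ℝ))
      (fun t _ => (hvd t).hasDerivWithinAt)
      (fun t _ => by simpa [hw, Real.norm_eq_abs] using hM₂ (x + t))
      convex_univ (mem_univ 0) (mem_univ z)
    simpa [h0, Real.norm_eq_abs] using this
  have hvb1 : ∀ z : ℝ, |v z| ≤ 2 * M₁ := by
    intro z
    calc |v z| ≤ |deriv u (x+z)| + |deriv u x| := abs_sub _ _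
    _ ≤ 2 * M₁ := by have := hM₁ (x+z); have := hM₁ x; linarith
  have hGb2 : ∀ z : ℝ, 0 ≤ z → |G z| ≤ M₂ * z ^ 2 := by
    intro z hz
    have h0 : G 0 = 0 := by simp [hG]
    have := Convex.norm_image_sub_le_of_norm_hasDerivWithin_le (s := Icc (0:ℝ) z)
      (fun t _ => (hGd t).hasDerivWithinAt)
      (fun t ht => by
        have h1 := hvb2 t
        have h2 : |t| ≤ z := by rw [abs_of_nonneg ht.1]; exact ht.2
        have : |v t| ≤ M₂ * z := h1.trans (by nlinarith [abs_nonneg t])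
        simpa [Real.norm_eq_abs] using this)
      (convex_Icc 0 z) (⟨le_rfl, hz⟩) (⟨hz, le_rfl⟩)
    rw [h0, sub_zero, sub_zero, Real.norm_eq_abs, Real.norm_eq_abs, abs_of_nonneg hz] at this
    nlinarith [this]
  have hGb1 : ∀ z : ℝ, 0 ≤ z → |G z| ≤ 2 * M₀ + M₁ * z := by
    intro z hz
    have : |G z| ≤ |u (x+z)| + |u x| + |deriv u x| * |z| := by
      calc |G z| ≤ |u (x+z) - u x| + |deriv u x * z| := abs_sub _ _
      _ ≤ |u (x+z)| + |u x| + |deriv u x| * |z| := by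
          rw [abs_mul]; exact add_le_add (abs_sub _ _) le_rfl
    have h1 := hM₀ (x+z); have h2 := hM₀ x; have h3 := hM₁ x
    rw [abs_of_nonneg hz] at this
    nlinarith [abs_nonneg (deriv u x)]
  -- continuity
  have hvc : Continuous v := (hud2.continuous.comp (continuous_const.add continuous_id)).sub
    continuous_const
  have hGc : Continuous G := ((hud.continuous.comp (continuous_const.add continuous_id)).sub
    continuous_const).sub (continuous_const.mul continuous_id)
  have hwc : Continuous w := hcw.comp (continuous_const.add continuous_id)
  -- rpow facts
  have e1 : ∀ z : ℝ, 0 < z → z / z ^ (1+α) = z ^ (-α) := by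
    intro z hz
    rw [show (-α) = 1 - (1+α) by ring, Real.rpow_sub hz, Real.rpow_one]
  have e2 : ∀ z : ℝ, 0 < z → z ^ (2:ℕ) / z ^ (2+α) = z ^ (-α) := by
    intro z hz
    rw [show (-α) = (2:ℝ) - (2+α) by ring, Real.rpow_sub hz]
    norm_num [Real.rpow_natCast]
  have e3 : ∀ z : ℝ, 0 < z → z / z ^ (2+α) = z ^ (-(1+α)) := by
    intro z hz
    rw [show (-(1+α)) = 1 - (2+α) by ring, Real.rpow_sub hz, Real.rpow_one]
  have rpos : ∀ z : ℝ, 0 < z → ∀ c : ℝ, 0 < z ^ c := fun z hz c => Real.rpow_pos_of_pos hz c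
  -- continuity of the three integrands away from 0
  have hPc : ∀ z : ℝ, 0 < z → ContinuousAt (fun t => v t / t ^ (1+α)) z := by
    intro z hz
    exact (hvc.continuousAt).div (Real.continuousAt_rpow_const z (1+α) (Or.inl hz.ne'))
      (rpos z hz _).ne'
  have hQc : ∀ z : ℝ, 0 < z → ContinuousAt (fun t => G t / t ^ (2+α)) z := by
    intro z hz
    exact (hGc.continuousAt).div (Real.continuousAt_rpow_const z (2+α) (Or.inl hz.ne'))
      (rpos z hz _).ne'
  have hWc : ∀ z : ℝ, 0 < z → ContinuousAt (fun t => w t / t ^ α) z := by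
    intro z hz
    exact (hwc.continuousAt).div (Real.continuousAt_rpow_const z α (Or.inl hz.ne'))
      (rpos z hz _).ne'
  have hPcOn : ∀ s : Set ℝ, s ⊆ Ioi 0 → ContinuousOn (fun t => v t / t ^ (1+α)) s :=
    fun s hs z hz => ((hPc z (hs hz)).continuousWithinAt)
  have hQcOn : ∀ s : Set ℝ, s ⊆ Ioi 0 → ContinuousOn (fun t => G t / t ^ (2+α)) s :=
    fun s hs z hz => ((hQc z (hs hz)).continuousWithinAt)
  have hWcOn : ∀ s : Set ℝ, s ⊆ Ioi 0 → ContinuousOn (fun t => w t / t ^ α) s :=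
    fun s hs z hz => ((hWc z (hs hz)).continuousWithinAt)
  -- integrability of rpow near 0
  have hrint : ∀ R : ℝ, 0 < R → IntegrableOn (fun z : ℝ => z ^ (-α)) (Ioc 0 R) := by
    intro R hR
    exact (intervalIntegrable_iff_integrableOn_Ioc_of_le hR.le).mp
      (intervalIntegral.intervalIntegrable_rpow' (by linarith))
  -- integrability of W on Ioc 0 R
  have hWb : ∀ z : ℝ, 0 < z → |w z / z ^ α| ≤ M₂ * z ^ (-α) := by
    intro z hz
    rw [abs_div, abs_of_pos (rpos z hz α), Real.rpow_neg hz.le, div_eq_mul_inv]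
    exact mul_le_mul_of_nonneg_right (hM₂ _) (inv_nonneg.mpr (rpos z hz α).le)
  have intW : ∀ R : ℝ, 0 < R → IntegrableOn (fun z => w z / z ^ α) (Ioc 0 R) := by
    intro R hR
    exact integrableOn_of_bound' measurableSet_Ioc ((hrint R hR).const_mul M₂)
      (hWcOn _ (Ioc_subset_Ioi_self)) (fun z hz => hWb z hz.1)
  -- integrability of P on Ioi 0
  have hPb1 : ∀ z : ℝ, z ∈ Ioc (0:ℝ) 1 → |v z / z ^ (1+α)| ≤ M₂ * z ^ (-α) := by
    intro z hz
    have hz0 := hz.1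
    rw [abs_div, abs_of_pos (rpos z hz0 _)]
    calc |v z| / z ^ (1+α) ≤ (M₂ * z) / z ^ (1+α) := by
          gcongr
          simpa [abs_of_pos hz0] using hvb2 z
    _ = M₂ * z ^ (-α) := by rw [mul_div_assoc, e1 z hz0]
  have hPb2 : ∀ z : ℝ, z ∈ Ioi (1:ℝ) → |v z / z ^ (1+α)| ≤ (2*M₁) * z ^ (-(1+α)) := by
    intro z hz
    have hz0 : (0:ℝ) < z := lt_trans one_pos hz
    rw [abs_div, abs_of_pos (rpos z hz0 _), Real.rpow_neg hz0.le, div_eq_mul_inv]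
    exact mul_le_mul_of_nonneg_right (hvb1 z) (inv_nonneg.mpr (rpos z hz0 _).le)
  have intP : IntegrableOn (fun z => v z / z ^ (1+α)) (Ioi (0:ℝ)) := by
    rw [← Ioc_union_Ioi_eq_Ioi (zero_le_one : (0:ℝ) ≤ 1)]
    refine IntegrableOn.union ?_ ?_
    · exact integrableOn_of_bound' measurableSet_Ioc ((hrint 1 one_pos).const_mul M₂)
        (hPcOn _ Ioc_subset_Ioi_self) hPb1
    · exact integrableOn_of_bound' measurableSet_Ioi
        ((integrableOn_Ioi_rpow_of_lt (by linarith) one_pos).const_mul (2*M₁))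
        (hPcOn (Ioi 1) (fun z hz => show (0:ℝ) < z from lt_trans one_pos hz)) hPb2
  -- integrability of Q on Ioi 0
  have hQb1 : ∀ z : ℝ, z ∈ Ioc (0:ℝ) 1 → |G z / z ^ (2+α)| ≤ M₂ * z ^ (-α) := by
    intro z hz
    have hz0 := hz.1
    rw [abs_div, abs_of_pos (rpos z hz0 _)]
    calc |G z| / z ^ (2+α) ≤ (M₂ * z ^ (2:ℕ)) / z ^ (2+α) := by
          gcongr
          exact hGb2 z hz0.le
    _ = M₂ * z ^ (-α) := by rw [mul_div_assoc, e2 z hz0]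
  have hQb2 : ∀ z : ℝ, z ∈ Ioi (1:ℝ) → |G z / z ^ (2+α)| ≤ (2*M₀+M₁) * z ^ (-(1+α)) := by
    intro z hz
    have hz1 : (1:ℝ) ≤ z := hz.le
    have hz0 : (0:ℝ) < z := lt_trans one_pos hz
    rw [abs_div, abs_of_pos (rpos z hz0 _)]
    calc |G z| / z ^ (2+α) ≤ ((2*M₀+M₁) * z) / z ^ (2+α) := by
          gcongr
          calc |G z| ≤ 2*M₀ + M₁*z := hGb1 z hz0.le
          _ ≤ (2*M₀+M₁) * z := by nlinarith
    _ = (2*M₀+M₁) * z ^ (-(1+α)) := by rw [mul_div_assoc, e3 z hz0]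
  have intQ : IntegrableOn (fun z => G z / z ^ (2+α)) (Ioi (0:ℝ)) := by
    rw [← Ioc_union_Ioi_eq_Ioi (zero_le_one : (0:ℝ) ≤ 1)]
    refine IntegrableOn.union ?_ ?_
    · exact integrableOn_of_bound' measurableSet_Ioc ((hrint 1 one_pos).const_mul M₂)
        (hQcOn _ Ioc_subset_Ioi_self) hQb1
    · exact integrableOn_of_bound' measurableSet_Ioi
        ((integrableOn_Ioi_rpow_of_lt (by linarith) one_pos).const_mul (2*M₀+M₁))
        (hQcOn (Ioi 1) (fun z hz => show (0:ℝ) < z from lt_trans one_pos hz)) hQb2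
  -- primitives and antiderivatives
  set Ψ : ℝ → ℝ := fun y => ∫ t in (0:ℝ)..y, v t / t ^ (1+α) with hΨdef
  set A : ℝ → ℝ := fun y => v y * y ^ (-α) + α * Ψ y with hAdef
  set B : ℝ → ℝ := fun y => (1/(1+α)) * Ψ y - (1/(1+α)) * (G y * y ^ (-(1+α))) with hBdef
  have h1α : (0:ℝ) < 1 + α := by linarith
  have hΨint : ∀ y : ℝ, 0 < y → IntervalIntegrable (fun t => v t / t ^ (1+α)) volume 0 y :=
    fun y hy => (intervalIntegrable_iff_integrableOn_Ioc_of_le hy.le).mpr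
      (intP.mono_set Ioc_subset_Ioi_self)
  have hΨd : ∀ y : ℝ, 0 < y → HasDerivAt Ψ (v y / y ^ (1+α)) y := by
    intro y hy
    exact intervalIntegral.integral_hasDerivAt_right (hΨint y hy)
      ⟨Ioi 0, Ioi_mem_nhds hy, (hPcOn _ subset_rfl).aestronglyMeasurable measurableSet_Ioi⟩
      (hPc y hy)
  have hAd : ∀ y : ℝ, 0 < y → HasDerivAt A (w y / y ^ α) y := by
    intro y hy
    have h1 : HasDerivAt (fun t : ℝ => t ^ (-α)) (-α * y ^ (-α - 1)) y :=
      Real.hasDerivAt_rpow_const (Or.inl hy.ne')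
    have h4 := ((hvd y).mul h1).add ((hΨd y hy).const_mul α)
    rw [hAdef]
    refine h4.congr_deriv ?_
    have hy1 : y ^ (1+α) ≠ 0 := (rpos y hy _).ne'
    have hyα : y ^ α ≠ 0 := (rpos y hy _).ne'
    have r1 : y ^ (-α) = (y ^ α)⁻¹ := Real.rpow_neg hy.le α
    have r2 : y ^ (-α - 1) = (y ^ (1+α))⁻¹ := by
      rw [show -α - 1 = -(1+α) by ring, Real.rpow_neg hy.le]
    have r3 : y ^ (1+α) = y ^ α * y := by
      rw [Real.rpow_add hy, Real.rpow_one, mul_comm]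
    rw [r1, r2, r3]
    field_simp
    ring
  have hBd : ∀ y : ℝ, 0 < y → HasDerivAt B (G y / y ^ (2+α)) y := by
    intro y hy
    have h1 : HasDerivAt (fun t : ℝ => t ^ (-(1+α))) (-(1+α) * y ^ (-(1+α) - 1)) y :=
      Real.hasDerivAt_rpow_const (Or.inl hy.ne')
    have h4 := ((hΨd y hy).const_mul (1/(1+α))).sub (((hGd y).mul h1).const_mul (1/(1+α)))
    rw [hBdef]
    refine h4.congr_deriv ?_
    have hy1 : y ^ (1+α) ≠ 0 := (rpos y hy _).ne'
    have hy2 : y ^ (2+α) ≠ 0 := (rpos y hy _).ne'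
    have r1 : y ^ (-(1+α)) = (y ^ (1+α))⁻¹ := Real.rpow_neg hy.le _
    have r2 : y ^ (-(1+α) - 1) = (y ^ (2+α))⁻¹ := by
      rw [show -(1+α) - 1 = -(2+α) by ring, Real.rpow_neg hy.le]
    have r3 : y ^ (2+α) = y ^ (1+α) * y := by
      rw [show (2:ℝ)+α = (1+α)+1 by ring, Real.rpow_add hy, Real.rpow_one]
    rw [r1, r2, r3]
    field_simp
    ring
  -- remaining primitives
  set W3 : ℝ → ℝ := fun y => ∫ t in (0:ℝ)..y, w t / t ^ α with hW3def
  set Q3 : ℝ → ℝ := fun y => ∫ t in (0:ℝ)..y, G t / t ^ (2+α) with hQ3def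
  -- FTC identities
  have ftcW : ∀ a b : ℝ, 0 < a → a ≤ b → (∫ t in a..b, w t / t ^ α) = A b - A a := by
    intro a b ha hab
    have hsub : uIcc a b ⊆ Ioi (0:ℝ) := by
      rw [uIcc_of_le hab]; exact fun t ht => lt_of_lt_of_le ha ht.1
    exact intervalIntegral.integral_eq_sub_of_hasDerivAt (fun t ht => hAd t (hsub ht))
      ((hWcOn _ hsub).intervalIntegrable)
  have ftcQ : ∀ a b : ℝ, 0 < a → a ≤ b → (∫ t in a..b, G t / t ^ (2+α)) = B b - B a := by
    intro a b ha hab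
    have hsub : uIcc a b ⊆ Ioi (0:ℝ) := by
      rw [uIcc_of_le hab]; exact fun t ht => lt_of_lt_of_le ha ht.1
    exact intervalIntegral.integral_eq_sub_of_hasDerivAt (fun t ht => hBd t (hsub ht))
      ((hQcOn _ hsub).intervalIntegrable)
  -- bound on primitives near zero
  have prim0 : ∀ f : ℝ → ℝ, (∀ t ∈ Ioc (0:ℝ) 1, |f t| ≤ M₂ * t ^ (-α)) →
      ∀ a ∈ Ioo (0:ℝ) 1, |∫ t in (0:ℝ)..a, f t| ≤ (M₂/(1-α)) * a ^ (1-α) := by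
    intro f hf a ha
    have hbint : IntervalIntegrable (fun t : ℝ => M₂ * t ^ (-α)) volume 0 a :=
      (intervalIntegral.intervalIntegrable_rpow' (by linarith)).const_mul M₂
    have hae : ∀ᵐ t ∂volume.restrict (uIoc (0:ℝ) a), ‖f t‖ ≤ M₂ * t ^ (-α) := by
      rw [uIoc_of_le ha.1.le]
      refine (ae_restrict_iff' measurableSet_Ioc).mpr (ae_of_all _ fun t ht => ?_)
      simpa [Real.norm_eq_abs] using hf t ⟨ht.1, le_trans ht.2 ha.2.le⟩
    have h := intervalIntegral.norm_integral_le_of_norm_le ha.1.le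
      ((ae_restrict_iff' measurableSet_Ioc).mp (by rwa [uIoc_of_le ha.1.le] at hae)) hbint
    rw [Real.norm_eq_abs] at h
    refine h.trans ?_
    rw [intervalIntegral.integral_const_mul,
      integral_rpow (Or.inl (by linarith : (-1:ℝ) < -α)),
      Real.zero_rpow (by linarith : -α + 1 ≠ 0), sub_zero,
      show -α + 1 = 1 - α by ring]
    apply le_of_eq
    ring
  -- limits at 0⁺
  have hA0 : Tendsto A (𝓝[>] (0:ℝ)) (𝓝 0) := by
    apply tendsto_zero_of_rpow_bound (C := M₂ + α * (M₂/(1-α))) (by linarith : (0:ℝ) < 1-α)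
    intro a ha
    have h1 : |v a * a ^ (-α)| ≤ M₂ * a ^ (1-α) := by
      rw [abs_mul, abs_of_pos (rpos a ha.1 _)]
      calc |v a| * a ^ (-α) ≤ (M₂ * a) * a ^ (-α) := by
            have hb : |v a| ≤ M₂ * a := by simpa [abs_of_pos ha.1] using hvb2 a
            exact mul_le_mul_of_nonneg_right hb (rpos a ha.1 _).le
      _ = M₂ * a ^ (1-α) := by
            rw [show (1:ℝ)-α = 1 + -α by ring, Real.rpow_add ha.1, Real.rpow_one]; ring
    have h2 := prim0 _ hPb1 a ha
    calc |A a| ≤ |v a * a ^ (-α)| + |α * Ψ a| := by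
          rw [hAdef]; exact abs_add_le _ _
    _ = |v a * a ^ (-α)| + α * |Ψ a| := by
          rw [abs_mul α, abs_of_pos hα0]
    _ ≤ M₂ * a ^ (1-α) + α * ((M₂/(1-α)) * a ^ (1-α)) :=
          add_le_add h1 (mul_le_mul_of_nonneg_left h2 hα0.le)
    _ = (M₂ + α * (M₂/(1-α))) * a ^ (1-α) := by ring
  have hB0 : Tendsto B (𝓝[>] (0:ℝ)) (𝓝 0) := by
    apply tendsto_zero_of_rpow_bound
      (C := (1/(1+α)) * (M₂/(1-α)) + (1/(1+α)) * M₂) (by linarith : (0:ℝ) < 1-α)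
    intro a ha
    have h1 : |G a * a ^ (-(1+α))| ≤ M₂ * a ^ (1-α) := by
      rw [abs_mul, abs_of_pos (rpos a ha.1 _)]
      calc |G a| * a ^ (-(1+α)) ≤ (M₂ * a ^ (2:ℕ)) * a ^ (-(1+α)) :=
            mul_le_mul_of_nonneg_right (hGb2 a ha.1.le) (rpos a ha.1 _).le
      _ = M₂ * a ^ (1-α) := by
            rw [mul_assoc, ← Real.rpow_natCast a 2, ← Real.rpow_add ha.1,
              show (2:ℕ) + -(1+α) = 1 - α by push_cast; ring]
    have h2 := prim0 _ hPb1 a ha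
    have h1α' : (0:ℝ) < 1/(1+α) := by positivity
    calc |B a| ≤ |(1/(1+α)) * Ψ a| + |(1/(1+α)) * (G a * a ^ (-(1+α)))| := by
          rw [hBdef]; exact abs_sub _ _
    _ = (1/(1+α)) * |Ψ a| + (1/(1+α)) * |G a * a ^ (-(1+α))| := by
          rw [abs_mul (1/(1+α)), abs_mul (1/(1+α)), abs_of_pos h1α']
    _ ≤ (1/(1+α)) * ((M₂/(1-α)) * a ^ (1-α)) + (1/(1+α)) * (M₂ * a ^ (1-α)) :=
          add_le_add (mul_le_mul_of_nonneg_left h2 h1α'.le)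
            (mul_le_mul_of_nonneg_left h1 h1α'.le)
    _ = ((1/(1+α)) * (M₂/(1-α)) + (1/(1+α)) * M₂) * a ^ (1-α) := by ring
  have hW30 : Tendsto W3 (𝓝[>] (0:ℝ)) (𝓝 0) := by
    apply tendsto_zero_of_rpow_bound (C := M₂/(1-α)) (by linarith : (0:ℝ) < 1-α)
    exact prim0 _ (fun t ht => hWb t ht.1)
  have hQ30 : Tendsto Q3 (𝓝[>] (0:ℝ)) (𝓝 0) := by
    apply tendsto_zero_of_rpow_bound (C := M₂/(1-α)) (by linarith : (0:ℝ) < 1-α)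
    exact prim0 _ hQb1
  -- the key identities W3 = A and Q3 = B on (0,∞)
  have key1 : ∀ R : ℝ, 0 < R → W3 R = A R := by
    intro R hR
    have hconst : ∀ a ∈ Ioo (0:ℝ) R, W3 a - A a = W3 R - A R := by
      intro a ha
      have hi1 : IntervalIntegrable (fun t => w t / t ^ α) volume 0 a :=
        (intervalIntegrable_iff_integrableOn_Ioc_of_le ha.1.le).mpr (intW a ha.1)
      have hsub : uIcc a R ⊆ Ioi (0:ℝ) := by
        rw [uIcc_of_le ha.2.le]; exact fun t ht => lt_of_lt_of_le ha.1 ht.1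
      have hi2 : IntervalIntegrable (fun t => w t / t ^ α) volume a R :=
        (hWcOn _ hsub).intervalIntegrable
      have hadd := intervalIntegral.integral_add_adjacent_intervals hi1 hi2
      have hftc := ftcW a R ha.1 ha.2.le
      have : W3 R = W3 a + (A R - A a) := by
        show (∫ t in (0:ℝ)..R, w t / t ^ α)
          = (∫ t in (0:ℝ)..a, w t / t ^ α) + (A R - A a)
        rw [← hadd, hftc]
      linarith
    have ht : Tendsto (fun a => W3 a - A a) (𝓝[>] (0:ℝ)) (𝓝 0) := by
      simpa using hW30.sub hA0
    have ht2 : Tendsto (fun a => W3 a - A a) (𝓝[>] (0:ℝ)) (𝓝 (W3 R - A R)) := by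
      refine Tendsto.congr' ?_ tendsto_const_nhds
      filter_upwards [Ioo_mem_nhdsGT hR] with a ha using (hconst a ha).symm
    have := tendsto_nhds_unique ht2 ht
    linarith
  have key2 : ∀ b : ℝ, 0 < b → Q3 b = B b := by
    intro R hR
    have hconst : ∀ a ∈ Ioo (0:ℝ) R, Q3 a - B a = Q3 R - B R := by
      intro a ha
      have hi1 : IntervalIntegrable (fun t => G t / t ^ (2+α)) volume 0 a :=
        (intervalIntegrable_iff_integrableOn_Ioc_of_le ha.1.le).mpr
          (intQ.mono_set Ioc_subset_Ioi_self)
      have hsub : uIcc a R ⊆ Ioi (0:ℝ) := by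
        rw [uIcc_of_le ha.2.le]; exact fun t ht => lt_of_lt_of_le ha.1 ht.1
      have hi2 : IntervalIntegrable (fun t => G t / t ^ (2+α)) volume a R :=
        (hQcOn _ hsub).intervalIntegrable
      have hadd := intervalIntegral.integral_add_adjacent_intervals hi1 hi2
      have hftc := ftcQ a R ha.1 ha.2.le
      have : Q3 R = Q3 a + (B R - B a) := by
        show (∫ t in (0:ℝ)..R, G t / t ^ (2+α))
          = (∫ t in (0:ℝ)..a, G t / t ^ (2+α)) + (B R - B a)
        rw [← hadd, hftc]
      linarith
    have ht : Tendsto (fun a => Q3 a - B a) (𝓝[>] (0:ℝ)) (𝓝 0) := by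
      simpa using hQ30.sub hB0
    have ht2 : Tendsto (fun a => Q3 a - B a) (𝓝[>] (0:ℝ)) (𝓝 (Q3 R - B R)) := by
      refine Tendsto.congr' ?_ tendsto_const_nhds
      filter_upwards [Ioo_mem_nhdsGT hR] with a ha using (hconst a ha).symm
    have := tendsto_nhds_unique ht2 ht
    linarith
  -- limits at infinity
  set L : ℝ := ∫ z in Ioi (0:ℝ), v z / z ^ (1+α) with hLdef
  have hPsiTop : Tendsto Ψ atTop (𝓝 L) :=
    intervalIntegral_tendsto_integral_Ioi 0 intP tendsto_id
  have hATop : Tendsto A atTop (𝓝 (α * L)) := by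
    have t1 : Tendsto (fun y => v y * y ^ (-α)) atTop (𝓝 0) := by
      apply tendsto_zero_of_rpow_bound_atTop hα0 (C := 2*M₁)
      intro a ha
      have ha0 : (0:ℝ) < a := lt_trans one_pos ha
      rw [abs_mul, abs_of_pos (rpos a ha0 _)]
      exact mul_le_mul_of_nonneg_right (hvb1 a) (rpos a ha0 _).le
    have := t1.add (hPsiTop.const_mul α)
    rw [hAdef]
    simpa using this
  have hBTop : Tendsto B atTop (𝓝 ((1/(1+α)) * L)) := by
    have t1 : Tendsto (fun y => G y * y ^ (-(1+α))) atTop (𝓝 0) := by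
      apply tendsto_zero_of_rpow_bound_atTop hα0 (C := 2*M₀ + M₁)
      intro a ha
      have ha0 : (0:ℝ) < a := lt_trans one_pos ha
      rw [abs_mul, abs_of_pos (rpos a ha0 _)]
      have ha1 : (1:ℝ) ≤ a := le_of_lt ha
      have hGa : |G a| ≤ (2*M₀ + M₁) * a := by
        calc |G a| ≤ 2*M₀ + M₁*a := hGb1 a ha0.le
        _ ≤ (2*M₀ + M₁) * a := by nlinarith
      calc |G a| * a ^ (-(1+α)) ≤ ((2*M₀ + M₁) * a) * a ^ (-(1+α)) :=
            mul_le_mul_of_nonneg_right hGa (rpos a ha0 _).le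
      _ = (2*M₀ + M₁) * a ^ (-α) := by
            have hrw : a * a ^ (-(1+α)) = a ^ (-α) := by
              rw [show (-α) = 1 + -(1+α) by ring, Real.rpow_add ha0, Real.rpow_one]
            rw [mul_assoc, hrw]
    have := (hPsiTop.const_mul (1/(1+α))).sub (t1.const_mul (1/(1+α)))
    rw [hBdef]
    simpa using this
  have hQ3Top : Tendsto Q3 atTop (𝓝 (∫ z in Ioi (0:ℝ), G z / z ^ (2+α))) :=
    intervalIntegral_tendsto_integral_Ioi 0 intQ tendsto_id
  have hQ3Top' : Tendsto Q3 atTop (𝓝 ((1/(1+α)) * L)) := by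
    refine Tendsto.congr' ?_ hBTop
    filter_upwards [eventually_gt_atTop (0:ℝ)] with b hb using (key2 b hb).symm
  have hIL : (∫ z in Ioi (0:ℝ), G z / z ^ (2+α)) = (1/(1+α)) * L :=
    tendsto_nhds_unique hQ3Top hQ3Top'
  have hW3Top : Tendsto W3 atTop (𝓝 (α * L)) := by
    refine Tendsto.congr' ?_ hATop
    filter_upwards [eventually_gt_atTop (0:ℝ)] with R hR using (key1 R hR).symm
  -- Gamma identities
  have hΓ2 : Real.Gamma (-1-α) ≠ 0 := by
    apply Real.Gamma_ne_zero
    intro m h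
    rcases m with _ | _ | m
    · push_cast at h; linarith
    · push_cast at h; linarith
    · push_cast at h
      have : (0:ℝ) ≤ (m:ℝ) := Nat.cast_nonneg m
      linarith
  have g2 : Real.Gamma (-α) = (-1-α) * Real.Gamma (-1-α) := by
    have h := Real.Gamma_add_one (show (-1-α) ≠ 0 by linarith)
    rw [show -1-α+1 = -α by ring] at h
    exact h
  have g1 : Real.Gamma (1-α) = -α * Real.Gamma (-α) := by
    have h := Real.Gamma_add_one (show (-α) ≠ 0 by linarith)
    rw [show -α+1 = 1-α by ring] at h
    exact h
  have hΓid : Real.Gamma (1-α) = α * (1+α) * Real.Gamma (-1-α) := by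
    rw [g1, g2]; ring
  have hconsts : (1/Real.Gamma (1-α)) * (α * L)
      = (1/Real.Gamma (-1-α)) * ((1/(1+α)) * L) := by
    rw [hΓid]
    field_simp
  -- final assembly
  have hGoal2 : (∫ z in Ioi (0:ℝ), (u (x+z) - u x - deriv u x * z) / z ^ (2+α))
      = ∫ z in Ioi (0:ℝ), G z / z ^ (2+α) := rfl
  have goalfun_eq : (fun R : ℝ => (1/Real.Gamma (1-α)) *
        ∫ z in Ioc (0:ℝ) R, deriv (deriv u) (x+z) / z ^ α)
      =ᶠ[atTop] fun R => (1/Real.Gamma (1-α)) * W3 R := by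
    filter_upwards [eventually_gt_atTop (0:ℝ)] with R hR
    have h1' : W3 R = ∫ z in Ioc (0:ℝ) R, w z / z ^ α := by
      rw [show W3 R = ∫ t in (0:ℝ)..R, w t / t ^ α from rfl,
        intervalIntegral.integral_of_le hR.le]
    rw [h1']
  rw [hGoal2, hIL, ← hconsts]
  exact Tendsto.congr' goalfun_eq.symm (hW3Top.const_mul _)
end

section
/- Let α ∈ (0,1) ∪ (1,2), let γ ∈ ℝ with |γ| ≤ min{α, 2−α}, and let ξ ∈ ℝ with ξ ≠ 0. Define c¹_{γ,α} = Γ(1+α)·sin((α−γ)π/2)/π and c²_{γ,α} = Γ(1+α)·sin((α+γ)π/2)/π. Then Γ(−α)·[c¹_{γ,α}·(iξ)^α + c²_{γ,α}·(−iξ)^α] = −|ξ|^α · e^{−i·sgn(ξ)·γπ/2}, where the complex powers (iξ)^α and (−iξ)^α are taken with the principal branch of the logarithm. -/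
open Complex Real

lemma cpow_I_mul (α ξ : ℝ) (hξ : ξ ≠ 0) :
    (Complex.I * (ξ:ℂ)) ^ (α:ℂ)
      = (|ξ| ^ α : ℝ) * Complex.exp ((Real.sign ξ * (α * Real.pi / 2) : ℝ) * Complex.I) := by
  have hne : Complex.I * (ξ:ℂ) ≠ 0 := by
    simp [Complex.I_ne_zero, Complex.ofReal_ne_zero, hξ]
  have habs : ‖Complex.I * (ξ:ℂ)‖ = |ξ| := by
    simp [map_mul]
  have harg : (Complex.I * (ξ:ℂ)).arg = Real.sign ξ * (Real.pi / 2) := by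
    rcases hξ.lt_or_gt with h | h
    · have : Complex.I * (ξ:ℂ) = ((-ξ : ℝ) : ℂ) * (-Complex.I) := by
        push_cast; ring
      rw [this, Complex.arg_real_mul _ (by linarith), Complex.arg_neg_I,
        Real.sign_of_neg h]
      ring
    · have : Complex.I * (ξ:ℂ) = ((ξ : ℝ) : ℂ) * Complex.I := by ring
      rw [this, Complex.arg_real_mul _ h, Complex.arg_I, Real.sign_of_pos h]
      ring
  have hlog : Complex.log (Complex.I * (ξ:ℂ))
      = (Real.log |ξ| : ℂ) + (Real.sign ξ * (Real.pi / 2) : ℝ) * Complex.I := by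
    apply Complex.ext
    · simp [Complex.log_re, habs]
    · simp [Complex.log_im, harg]
  rw [Complex.cpow_def_of_ne_zero hne, hlog]
  have : ((Real.log |ξ| : ℂ) + (Real.sign ξ * (Real.pi / 2) : ℝ) * Complex.I) * (α:ℂ)
      = ((Real.log |ξ| * α : ℝ) : ℂ) + ((Real.sign ξ * (α * Real.pi / 2) : ℝ) : ℂ) * Complex.I := by
    push_cast; ring
  rw [this, Complex.exp_add, ← Complex.ofReal_exp,
    ← Real.rpow_def_of_pos (abs_pos.mpr hξ)]

lemma key_gamma (α : ℝ) (h0 : 0 < α) (h2 : α < 2) (h1 : α ≠ 1) :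
    Real.Gamma (-α) * Real.Gamma (1 + α) * Real.sin (Real.pi * α) = -Real.pi := by
  have hα0 : α ≠ 0 := ne_of_gt h0
  have h3 : Real.Gamma (1 + α) = α * Real.Gamma α := by
    rw [add_comm]; exact Real.Gamma_add_one hα0
  have h2' : Real.Gamma (1 - α) = -α * Real.Gamma (-α) := by
    have := Real.Gamma_add_one (neg_ne_zero.mpr hα0)
    rw [show -α + 1 = 1 - α by ring] at this
    exact this
  have h1' : Real.Gamma α * Real.Gamma (1 - α) * Real.sin (Real.pi * α) = Real.pi := by
    have hr := Real.Gamma_mul_Gamma_one_sub α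
    have hsin : Real.sin (Real.pi * α) ≠ 0 := by
      rcases lt_or_gt_of_ne h1 with h | h
      · have : 0 < Real.sin (Real.pi * α) :=
          Real.sin_pos_of_pos_of_lt_pi (by positivity) (by nlinarith [Real.pi_pos])
        linarith
      · have h' : Real.sin (Real.pi * α - 2 * Real.pi) < 0 :=
          Real.sin_neg_of_neg_of_neg_pi_lt (by nlinarith [Real.pi_pos])
            (by nlinarith [Real.pi_pos])
        rw [Real.sin_sub_two_pi] at h'
        linarith
    rw [hr]
    field_simp
  linear_combination (-1) * h1' + (Real.Gamma α * Real.sin (Real.pi * α)) * h2'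
    + (Real.Gamma (-α) * Real.sin (Real.pi * α)) * h3

/-- For `α ∈ (0,1) ∪ (1,2)`, `|γ| ≤ min{α, 2−α}`, and real `ξ ≠ 0`, with
`c¹ = Γ(1+α)·sin((α−γ)π/2)/π` and `c² = Γ(1+α)·sin((α+γ)π/2)/π`,
`Γ(−α)·[c¹·(iξ)^α + c²·(−iξ)^α] = −|ξ|^α · e^{−i·sgn(ξ)·γπ/2}`,
where the complex powers use the principal branch. -/
theorem riesz_feller_symbol
    (α γ ξ : ℝ)
    (hα : α ∈ Set.Ioo (0:ℝ) 1 ∪ Set.Ioo (1:ℝ) 2)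
    (hγ : |γ| ≤ min α (2 - α))
    (hξ : ξ ≠ 0) :
    (Complex.ofReal (Real.Gamma (-α))) *
        (Complex.ofReal (Real.Gamma (1 + α) * Real.sin ((α - γ) * Real.pi / 2) / Real.pi) *
            (Complex.I * (ξ : ℂ)) ^ (α : ℂ)
          + Complex.ofReal (Real.Gamma (1 + α) * Real.sin ((α + γ) * Real.pi / 2) / Real.pi) *
            (-(Complex.I * (ξ : ℂ))) ^ (α : ℂ))
      = -Complex.ofReal (|ξ| ^ α) *
          Complex.exp (-Complex.I * (Real.sign ξ : ℂ) * (γ : ℂ) * (Real.pi : ℂ) / 2) := by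
  have h0 : 0 < α := by rcases hα with h | h; exacts [h.1, by linarith [h.1]]
  have h2 : α < 2 := by rcases hα with h | h; exacts [by linarith [h.2], h.2]
  have h1 : α ≠ 1 := by rcases hα with h | h; exacts [ne_of_lt h.2, ne_of_gt h.1]
  have hK := key_gamma α h0 h2 h1
  rw [show Real.pi * α = 2 * (α * (Real.pi/2)) by ring, Real.sin_two_mul,
    show α * (Real.pi/2) = α * Real.pi / 2 by ring] at hK
  rw [cpow_I_mul α ξ hξ,
    show -(Complex.I * (ξ:ℂ)) = Complex.I * ((-ξ : ℝ):ℂ) by push_cast; ring,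
    cpow_I_mul α (-ξ) (neg_ne_zero.mpr hξ),
    show ((α - γ) * Real.pi / 2) = α * (Real.pi/2) - γ * (Real.pi/2) by ring,
    show ((α + γ) * Real.pi / 2) = α * (Real.pi/2) + γ * (Real.pi/2) by ring,
    Real.sin_sub, Real.sin_add, abs_neg]
  have hπ := Real.pi_ne_zero
  have hP : (0:ℝ) < |ξ| ^ α := Real.rpow_pos_of_pos (abs_pos.mpr hξ) α
  rcases hξ.lt_or_gt with h | h
  · rw [Real.sign_of_neg h, Real.sign_of_pos (by linarith : (0:ℝ) < -ξ)]
    rw [show ((-1 : ℝ) * (α * Real.pi / 2) : ℝ) = (-(α * (Real.pi/2)) : ℝ) by ring,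
      show ((1 : ℝ) * (α * Real.pi / 2) : ℝ) = (α * (Real.pi/2) : ℝ) by ring,
      show -Complex.I * ((-1:ℝ) : ℂ) * (γ : ℂ) * (Real.pi : ℂ) / 2
        = ((γ * (Real.pi/2) : ℝ) : ℂ) * Complex.I by push_cast; ring]
    simp only [Complex.exp_mul_I, ← Complex.ofReal_cos, ← Complex.ofReal_sin,
      Real.cos_neg, Real.sin_neg]
    rw [Complex.ext_iff]
    constructor
    · simp only [Complex.add_re, Complex.add_im, Complex.mul_re, Complex.mul_im,
        Complex.ofReal_re, Complex.ofReal_im, Complex.I_re, Complex.I_im,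
        Complex.neg_re, Complex.neg_im]
      ring_nf
      field_simp
      linear_combination (Real.cos (Real.pi * γ / 2)) * hK
    · simp only [Complex.add_re, Complex.add_im, Complex.mul_re, Complex.mul_im,
        Complex.ofReal_re, Complex.ofReal_im, Complex.I_re, Complex.I_im,
        Complex.neg_re, Complex.neg_im]
      ring_nf
      field_simp
      linear_combination (Real.sin (Real.pi * γ / 2)) * hK
  · rw [Real.sign_of_pos h, Real.sign_of_neg (by linarith : -ξ < (0:ℝ))]
    rw [show ((-1 : ℝ) * (α * Real.pi / 2) : ℝ) = (-(α * (Real.pi/2)) : ℝ) by ring,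
      show ((1 : ℝ) * (α * Real.pi / 2) : ℝ) = (α * (Real.pi/2) : ℝ) by ring,
      show -Complex.I * ((1:ℝ) : ℂ) * (γ : ℂ) * (Real.pi : ℂ) / 2
        = ((-(γ * (Real.pi/2)) : ℝ) : ℂ) * Complex.I by push_cast; ring]
    simp only [Complex.exp_mul_I, ← Complex.ofReal_cos, ← Complex.ofReal_sin,
      Real.cos_neg, Real.sin_neg]
    rw [Complex.ext_iff]
    constructor
    · simp only [Complex.add_re, Complex.add_im, Complex.mul_re, Complex.mul_im,
        Complex.ofReal_re, Complex.ofReal_im, Complex.I_re, Complex.I_im,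
        Complex.neg_re, Complex.neg_im]
      ring_nf
      field_simp
      linear_combination (Real.cos (Real.pi * γ / 2)) * hK
    · simp only [Complex.add_re, Complex.add_im, Complex.mul_re, Complex.mul_im,
        Complex.ofReal_re, Complex.ofReal_im, Complex.I_re, Complex.I_im,
        Complex.neg_re, Complex.neg_im]
      ring_nf
      field_simp
      linear_combination (-Real.sin (Real.pi * γ / 2)) * hK
end

section
/- Let α ∈ (0,1), let k be a positive integer, and let x ∈ ℝ. Then ∑_{n=1}^{k} C(k−1, n−1) · C(−α, n) · (i−x)^{−n−α} · (2i)^{n−1} = −(α · e^{−iπ(1+α)/2}/(ix+1)^{1+α}) · ₂F₁(1−k, 1+α; 2; 2/(ix+1)), where C(−α, n) = (−α)(−α−1)⋯(−α−n+1)/n! is the generalized binomial coefficient and the complex powers (i−x)^{−n−α} and (ix+1)^{1+α} are taken with the principal branch of the logarithm. -/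
/-- Pochhammer symbol `(a)_n = a(a+1)⋯(a+n−1)`. -/
noncomputable def poch (a : ℂ) (n : ℕ) : ℂ := ∏ j ∈ Finset.range n, (a + j)

/-- Terminating Gaussian hypergeometric sum `₂F₁(−m, b; c; w)`. -/
noncomputable def F21 (m : ℕ) (b c w : ℂ) : ℂ :=
  ∑ n ∈ Finset.range (m + 1),
    poch (-(m : ℂ)) n * poch b n / (poch c n * (n.factorial : ℂ)) * w ^ n

/-- Generalized binomial coefficient `C(a, n) = a(a−1)⋯(a−n+1)/n!`. -/
noncomputable def genBinom (a : ℂ) (n : ℕ) : ℂ :=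
  (∏ j ∈ Finset.range n, (a - j)) / (n.factorial : ℂ)

lemma poch_two (m : ℕ) : poch 2 m = ((m+1).factorial : ℂ) := by
  induction m with
  | zero => simp [poch]
  | succ n ih =>
      rw [poch, Finset.prod_range_succ, ← poch, ih, Nat.factorial_succ (n+1)]
      push_cast
      ring

lemma poch_neg_nat (N : ℕ) : ∀ m : ℕ, m ≤ N →
    poch (-(N:ℂ)) m = (-1)^m * (N.choose m) * (m.factorial : ℂ) := by
  intro m
  induction m with
  | zero => simp [poch]
  | succ n ih =>
      intro h
      have hn : n ≤ N := Nat.le_of_succ_le h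
      rw [poch, Finset.prod_range_succ, ← poch, ih hn]
      have hch : (N.choose (n+1)) * (n+1) = N.choose n * (N - n) :=
        Nat.choose_succ_right_eq N n
      have hcast : ((N - n : ℕ) : ℂ) = (N : ℂ) - n := by
        push_cast [Nat.cast_sub hn]; ring
      have hch' : ((N.choose (n+1) : ℂ)) * (n+1) = (N.choose n : ℂ) * ((N:ℂ) - n) := by
        rw [← hcast]; exact_mod_cast congrArg (Nat.cast (R := ℂ)) hch
      rw [Nat.factorial_succ]
      push_cast
      linear_combination ((-1:ℂ))^n * (n.factorial : ℂ) * hch'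

lemma genBinom_neg (α : ℂ) (m : ℕ) :
    genBinom (-α) (m+1) = (-1)^(m+1) * α * poch (1+α) m / (((m+1).factorial : ℕ) : ℂ) := by
  rw [genBinom]
  congr 1
  rw [Finset.prod_range_succ']
  have h1 : ∀ j ∈ Finset.range m, (-α - ((j+1 : ℕ) : ℂ)) = (-1) * ((1+α) + (j : ℕ)) := by
    intro j _; push_cast; ring
  rw [Finset.prod_congr rfl h1, Finset.prod_mul_distrib, Finset.prod_const, Finset.card_range, ← poch]
  push_cast
  ring

/-- For `α ∈ (0,1)`, `k` a positive integer and `x ∈ ℝ`,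
`∑_{n=1}^{k} C(k−1, n−1)·C(−α, n)·(i−x)^{−n−α}·(2i)^{n−1}
  = −(α·e^{−iπ(1+α)/2}/(ix+1)^{1+α})·₂F₁(1−k, 1+α; 2; 2/(ix+1))`,
complex powers taken with the principal branch. -/
theorem residue_hypergeom
    (α : ℝ) (hα : α ∈ Set.Ioo (0:ℝ) 1) (k : ℕ) (hk : 0 < k) (x : ℝ) :
    ∑ n ∈ Finset.Icc 1 k,
        ((k - 1).choose (n - 1) : ℂ) * genBinom (-(α : ℂ)) n *
          (Complex.I - (x : ℂ)) ^ (-(n : ℂ) - (α : ℂ)) * (2 * Complex.I) ^ (n - 1)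
      = -((α : ℂ) * Complex.exp (-Complex.I * (Real.pi : ℂ) * (1 + (α : ℂ)) / 2) /
            (Complex.I * (x : ℂ) + 1) ^ ((1 : ℂ) + (α : ℂ))) *
          F21 (k - 1) (1 + (α : ℂ)) 2 (2 / (Complex.I * (x : ℂ) + 1)) := by
  set w : ℂ := Complex.I * x + 1 with hw_def
  have hwre : w.re = 1 := by simp [hw_def]
  have hw : w ≠ 0 := fun h => by simp [h] at hwre
  have hz : Complex.I - (x:ℂ) = Complex.I * w := by
    rw [hw_def]; linear_combination (-(x:ℂ)) * Complex.I_sq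
  have harg : Complex.arg Complex.I + Complex.arg w ∈ Set.Ioc (-Real.pi) Real.pi := by
    rw [Complex.arg_I]
    have h2 : |Complex.arg w| < Real.pi/2 :=
      Complex.abs_arg_lt_pi_div_two_iff.mpr (Or.inl (by rw [hwre]; norm_num))
    rw [abs_lt] at h2
    constructor
    · nlinarith [Real.pi_pos, h2.1]
    · nlinarith [Real.pi_pos, h2.2]
  have hlog : Complex.log (Complex.I * w) = Complex.log Complex.I + Complex.log w :=
    Complex.log_mul Complex.I_ne_zero hw harg
  have hmul : ∀ s : ℂ, (Complex.I * w) ^ s = Complex.I ^ s * w ^ s := by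
    intro s
    rw [Complex.cpow_def_of_ne_zero (mul_ne_zero Complex.I_ne_zero hw),
        Complex.cpow_def_of_ne_zero Complex.I_ne_zero, Complex.cpow_def_of_ne_zero hw,
        hlog, add_mul, Complex.exp_add]
  have hexpI : Complex.exp (-Complex.I * (Real.pi:ℂ) / 2) = -Complex.I := by
    have h : -Complex.I * (Real.pi:ℂ)/2 = (-((Real.pi:ℂ)/2)) * Complex.I := by ring
    rw [h, Complex.exp_mul_I, Complex.cos_neg, Complex.sin_neg]
    have h2 : ((Real.pi:ℂ)/2) = ((Real.pi/2 : ℝ) : ℂ) := by push_cast; ring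
    rw [h2, ← Complex.ofReal_cos, ← Complex.ofReal_sin, Real.cos_pi_div_two,
        Real.sin_pi_div_two]
    simp
  have hIpow : ∀ m : ℕ, Complex.I ^ (-((m+1 : ℕ) : ℂ) - (α:ℂ))
      = Complex.exp (-Complex.I * (Real.pi:ℂ) * (1 + (α:ℂ)) / 2) * (-Complex.I)^m := by
    intro m
    rw [Complex.cpow_def_of_ne_zero Complex.I_ne_zero, Complex.log_I]
    have h : ((Real.pi:ℂ)/2 * Complex.I) * (-((m+1 : ℕ) : ℂ) - (α:ℂ))
        = -Complex.I * (Real.pi:ℂ) * (1 + (α:ℂ)) / 2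
          + (m : ℂ) * (-Complex.I * (Real.pi:ℂ) / 2) := by
      push_cast; ring
    rw [h, Complex.exp_add, Complex.exp_nat_mul, hexpI]
  have hwpow : ∀ m : ℕ, w ^ (-((m+1 : ℕ) : ℂ) - (α:ℂ))
      = (w ^ ((1:ℂ) + (α:ℂ)))⁻¹ * (w ^ m)⁻¹ := by
    intro m
    rw [show (-((m+1 : ℕ) : ℂ) - (α:ℂ)) = (-((1:ℂ) + (α:ℂ))) + (-(m:ℂ)) by push_cast; ring,
        Complex.cpow_add _ _ hw, Complex.cpow_neg, Complex.cpow_neg, Complex.cpow_natCast]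
  have hW1 : w ^ ((1:ℂ) + (α:ℂ)) ≠ 0 := by
    simp [Complex.cpow_eq_zero_iff, hw]
  have hk1 : k - 1 + 1 = k := Nat.succ_pred_eq_of_pos hk
  rw [← Finset.Ico_add_one_right_eq_Icc, Finset.sum_Ico_eq_sum_range, F21, Finset.mul_sum]
  simp only [Nat.add_sub_cancel, hk1]
  refine Finset.sum_congr rfl ?_
  intro m hm
  have hmk : m < k := Finset.mem_range.mp hm
  have hmk1 : m ≤ k - 1 := by omega
  simp only [Nat.add_comm 1 m, Nat.add_sub_cancel]
  rw [hz, hmul, hIpow m, hwpow m, genBinom_neg (α:ℂ) m,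
      poch_neg_nat (k-1) m hmk1, poch_two, div_pow]
  have hfm : ((m.factorial : ℕ) : ℂ) ≠ 0 := Nat.cast_ne_zero.mpr m.factorial_ne_zero
  have hfm1 : (((m+1).factorial : ℕ) : ℂ) ≠ 0 := Nat.cast_ne_zero.mpr (m+1).factorial_ne_zero
  have hwm : (w : ℂ) ^ m ≠ 0 := pow_ne_zero m hw
  have hii : (-Complex.I) ^ m * (2 * Complex.I) ^ m = 2 ^ m := by
    rw [← mul_pow]
    norm_num [show -Complex.I * (2 * Complex.I) = -2 * (Complex.I * Complex.I) by ring,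
      Complex.I_mul_I]
  field_simp
  linear_combination (((k-1).choose m : ℂ) * (-1:ℂ)^(m+1) * (α:ℂ) * poch (1 + (α:ℂ)) m) * hii
end

section
/- Let α ∈ (0,1) and let k be a positive integer. Then (−ik/Γ(1−α)) ∫_{0}^{∞} z^{−α} · (−z+i)^k/(1+z²)^{1+k/2} dz = −(i^{1+k}·k/(2·Γ(1−α)·Γ(1+k/2))) · ∑_{n=0}^{k} iⁿ · C(k,n) · Γ((1+α+k−n)/2) · Γ((1−α+n)/2). -/
open MeasureTheory Set

open Real Filter

/-T1-/

lemma cplx_eq_real (u v x : ℝ) (hx : x ∈ Ioo (0:ℝ) 1) :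
    (x:ℂ) ^ ((u:ℂ) - 1) * ((1:ℂ) - x) ^ ((v:ℂ) - 1)
      = Complex.ofReal (x ^ (u-1) * (1-x) ^ (v-1)) := by
  obtain ⟨h0, h1⟩ := hx
  rw [show ((1:ℂ) - x) = ((1 - x : ℝ) : ℂ) by push_cast; ring,
    show ((u:ℂ) - 1) = ((u - 1 : ℝ) : ℂ) by push_cast; ring,
    show ((v:ℂ) - 1) = ((v - 1 : ℝ) : ℂ) by push_cast; ring,
    ← Complex.ofReal_cpow h0.le, ← Complex.ofReal_cpow (by linarith), Complex.ofReal_mul]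

lemma realBeta_int (u v : ℝ) (hu : 0 < u) (hv : 0 < v) :
    IntegrableOn (fun x => x ^ (u-1) * (1-x) ^ (v-1)) (Ioo (0:ℝ) 1) := by
  have hc : IntegrableOn (fun x : ℝ => (x:ℂ) ^ ((u:ℂ) - 1) * ((1:ℂ) - x) ^ ((v:ℂ) - 1))
      (Ioo (0:ℝ) 1) := by
    have := Complex.betaIntegral_convergent (u := (u:ℂ)) (v := (v:ℂ)) (by simpa) (by simpa)
    exact ((intervalIntegrable_iff_integrableOn_Ioc_of_le zero_le_one).mp this).mono_set
      Ioo_subset_Ioc_self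
  refine (MeasureTheory.IntegrableOn.congr_fun hc.re (fun x hx => ?_) measurableSet_Ioo)
  rw [cplx_eq_real u v x hx]; simp

lemma realBeta_val (u v : ℝ) (hu : 0 < u) (hv : 0 < v) :
    ∫ x in Ioo (0:ℝ) 1, x ^ (u-1) * (1-x) ^ (v-1)
      = Real.Gamma u * Real.Gamma v / Real.Gamma (u+v) := by
  have key := Complex.Gamma_mul_Gamma_eq_betaIntegral (s := (u:ℂ)) (t := (v:ℂ))
    (by simpa) (by simpa)
  rw [Complex.betaIntegral] at key
  rw [intervalIntegral.integral_of_le zero_le_one, integral_Ioc_eq_integral_Ioo] at key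
  rw [setIntegral_congr_fun measurableSet_Ioo (fun x hx => cplx_eq_real u v x hx)] at key
  rw [show (∫ x in Ioo (0:ℝ) 1, ((x ^ (u-1) * (1-x) ^ (v-1) : ℝ) : ℂ))
      = ((∫ x in Ioo (0:ℝ) 1, x ^ (u-1) * (1-x) ^ (v-1) : ℝ) : ℂ) from integral_ofReal] at key
  rw [show ((u:ℂ) + v) = ((u + v : ℝ) : ℂ) by push_cast; ring] at key
  rw [Complex.Gamma_ofReal, Complex.Gamma_ofReal, Complex.Gamma_ofReal, ← Complex.ofReal_mul,
    ← Complex.ofReal_mul] at key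
  have := Complex.ofReal_injective key
  have hG : Real.Gamma (u+v) ≠ 0 := (Real.Gamma_pos_of_pos (by linarith)).ne'
  field_simp
  linarith [this]

section subst
variable (u v : ℝ)

lemma fmap_deriv : ∀ t ∈ Ioi (0:ℝ), HasDerivWithinAt (fun t : ℝ => t/(1+t))
    (1/(1+t)^2) (Ioi 0) t := by
  intro t ht
  have h1 : (0:ℝ) < 1 + t := by simp at ht; linarith
  have : HasDerivAt (fun t : ℝ => t/(1+t)) ((1*(1+t) - t*(0+1))/(1+t)^2) t :=
    (hasDerivAt_id t).div ((hasDerivAt_const t 1).add (hasDerivAt_id t)) h1.ne'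
  convert this.hasDerivWithinAt using 1
  · rfl
  · rfl
  · ring

lemma fmap_inj : InjOn (fun t : ℝ => t/(1+t)) (Ioi 0) := by
  intro a ha b hb h
  simp only [mem_Ioi] at ha hb
  have h1 : (0:ℝ) < 1 + a := by linarith
  have h2 : (0:ℝ) < 1 + b := by linarith
  field_simp at h
  linarith

lemma fmap_image : (fun t : ℝ => t/(1+t)) '' (Ioi 0) = Ioo (0:ℝ) 1 := by
  ext y
  simp only [mem_image, mem_Ioi, mem_Ioo]
  constructor
  · rintro ⟨t, ht, rfl⟩
    have h1 : (0:ℝ) < 1 + t := by linarith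
    constructor
    · positivity
    · rw [div_lt_one h1]; linarith
  · rintro ⟨h0, h1⟩
    have hy : (0:ℝ) < 1 - y := by linarith
    refine ⟨y/(1-y), by positivity, ?_⟩
    field_simp
    ring

lemma fmap_pointwise (hu : 0 < u) (hv : 0 < v) (t : ℝ) (ht : t ∈ Ioi (0:ℝ)) :
    |1/(1+t)^2| • ((t/(1+t)) ^ (u-1) * (1 - t/(1+t)) ^ (v-1))
      = t^(u-1) * (1+t)^(-(u+v)) := by
  simp only [mem_Ioi] at ht
  have h1 : (0:ℝ) < 1 + t := by linarith
  have e1 : 1 - t/(1+t) = 1/(1+t) := by field_simp; ring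
  rw [smul_eq_mul, abs_of_pos (by positivity), e1,
    div_rpow ht.le h1.le, div_rpow zero_le_one h1.le, one_rpow]
  have e2 : (1+t)^(-(u+v)) = ((1+t)^(u-1) * (1+t)^(v-1) * (1+t)^(2:ℝ))⁻¹ := by
    rw [← rpow_add h1, ← rpow_add h1, ← rpow_neg h1.le]
    congr 1; ring
  have e3 : ((1+t):ℝ)^(2:ℝ) = (1+t)^(2:ℕ) := by
    rw [← rpow_natCast (1+t) 2]; norm_num
  rw [e2, ← e3]
  have p1 : (0:ℝ) < (1+t)^(u-1) := rpow_pos_of_pos h1 _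
  have p2 : (0:ℝ) < (1+t)^(v-1) := rpow_pos_of_pos h1 _
  have p3 : (0:ℝ) < (1+t)^(2:ℝ) := rpow_pos_of_pos h1 _
  rw [mul_inv, mul_inv]
  field_simp

lemma betaIoi_val (hu : 0 < u) (hv : 0 < v) :
    ∫ t in Ioi (0:ℝ), t^(u-1) * (1+t)^(-(u+v))
      = Real.Gamma u * Real.Gamma v / Real.Gamma (u+v) := by
  have := integral_image_eq_integral_abs_deriv_smul measurableSet_Ioi (fmap_deriv)
    fmap_inj (fun x => x ^ (u-1) * (1-x) ^ (v-1))
  rw [fmap_image] at this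
  rw [← realBeta_val u v hu hv, this]
  exact setIntegral_congr_fun measurableSet_Ioi (fun t ht => (fmap_pointwise u v hu hv t ht).symm)

lemma betaIoi_int (hu : 0 < u) (hv : 0 < v) :
    IntegrableOn (fun t : ℝ => t^(u-1) * (1+t)^(-(u+v))) (Ioi 0) := by
  have := (integrableOn_image_iff_integrableOn_abs_deriv_smul measurableSet_Ioi fmap_deriv
    fmap_inj (fun x => x ^ (u-1) * (1-x) ^ (v-1))).mp (by rw [fmap_image]; exact realBeta_int u v hu hv)
  exact this.congr_fun (fun t ht => fmap_pointwise u v hu hv t ht) measurableSet_Ioi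

end subst

section sq
variable (s p : ℝ)

lemma sq_deriv : ∀ x ∈ Ioi (0:ℝ), HasDerivWithinAt (fun x : ℝ => x^2)
    ((2:ℝ)*x) (Ioi 0) x := by
  intro x _
  simpa using (hasDerivAt_pow 2 x).hasDerivWithinAt

lemma sq_inj : InjOn (fun x : ℝ => x^2) (Ioi 0) := by
  intro a ha b hb h
  simp only [mem_Ioi] at ha hb
  dsimp at h
  have h0 : (a-b)*(a+b) = 0 := by nlinarith
  rcases mul_eq_zero.mp h0 with h' | h' <;> linarith

lemma sq_image : (fun x : ℝ => x^2) '' (Ioi 0) = Ioi (0:ℝ) := by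
  ext y
  simp only [mem_image, mem_Ioi]
  constructor
  · rintro ⟨x, hx, rfl⟩; positivity
  · intro hy
    exact ⟨Real.sqrt y, Real.sqrt_pos.mpr hy, Real.sq_sqrt hy.le⟩

lemma sq_pointwise (hs : 0 < s) (x : ℝ) (hx : x ∈ Ioi (0:ℝ)) :
    |(2:ℝ)*x| • ((x^2)^(s/2-1) * (1+x^2)^(-p))
      = 2 * (x^(s-1) * (1+x^2)^(-p)) := by
  simp only [mem_Ioi] at hx
  rw [smul_eq_mul, abs_of_pos (by positivity)]
  have e1 : ((x^2:ℝ))^(s/2-1) = x^(s-2) := by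
    rw [← rpow_natCast x 2, ← rpow_mul hx.le]
    congr 1; ring
  have e2 : x * x^(s-2) = x^(s-1) := by
    nth_rewrite 1 [← rpow_one x]
    rw [← rpow_add hx]
    congr 1; ring
  rw [e1, ← e2]; ring

lemma betaSq_int (hs : 0 < s) (hp : s < 2*p) :
    IntegrableOn (fun z : ℝ => z^(s-1) * (1+z^2)^(-p)) (Ioi 0) := by
  have hg : IntegrableOn (fun y : ℝ => y^(s/2-1) * (1+y)^(-p)) (Ioi 0) := by
    have := betaIoi_int (s/2) (p - s/2) (by linarith) (by linarith)
    simpa using this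
  have := (integrableOn_image_iff_integrableOn_abs_deriv_smul measurableSet_Ioi sq_deriv
    sq_inj (fun y : ℝ => y^(s/2-1) * (1+y)^(-p))).mp (by rw [sq_image]; exact hg)
  have h2 : IntegrableOn (fun x : ℝ => 2 * (x^(s-1) * (1+x^2)^(-p))) (Ioi 0) :=
    MeasureTheory.IntegrableOn.congr_fun this (fun x hx => sq_pointwise s p hs x hx)
      measurableSet_Ioi
  have h3 := h2.const_mul (1/2 : ℝ)
  refine MeasureTheory.IntegrableOn.congr_fun h3 (fun x _ => ?_) measurableSet_Ioi
  ring

lemma betaSq_val (hs : 0 < s) (hp : s < 2*p) :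
    ∫ z in Ioi (0:ℝ), z^(s-1) * (1+z^2)^(-p)
      = Real.Gamma (s/2) * Real.Gamma (p - s/2) / (2 * Real.Gamma p) := by
  have key := integral_image_eq_integral_abs_deriv_smul measurableSet_Ioi sq_deriv
    sq_inj (fun y : ℝ => y^(s/2-1) * (1+y)^(-p))
  rw [sq_image] at key
  rw [setIntegral_congr_fun measurableSet_Ioi (fun x hx => sq_pointwise s p hs x hx)] at key
  rw [MeasureTheory.integral_const_mul] at key
  have hval : ∫ y in Ioi (0:ℝ), y^(s/2-1) * (1+y)^(-p)
      = Real.Gamma (s/2) * Real.Gamma (p - s/2) / Real.Gamma p := by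
    have := betaIoi_val (s/2) (p - s/2) (by linarith) (by linarith)
    simpa using this
  rw [hval] at key
  have hG : (0:ℝ) < Real.Gamma p := Real.Gamma_pos_of_pos (by linarith)
  rw [div_eq_iff hG.ne'] at key
  rw [eq_div_iff (by positivity : (2:ℝ) * Real.Gamma p ≠ 0)]
  rw [key]; ring

end sq

lemma Ipow_helper (k n : ℕ) (h : n ≤ k) :
    ((-1:ℂ))^n * Complex.I^(k-n) = Complex.I^k * Complex.I^n := by
  have e : ((-1:ℂ))^n = Complex.I^(2*n) := by
    rw [pow_mul]; norm_num [Complex.I_sq]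
  rw [e, ← pow_add, ← pow_add]
  congr 1; omega

/-- For `α ∈ (0,1)` and `k` a positive integer,
`(−ik/Γ(1−α)) ∫_{0}^{∞} z^{−α}·(−z+i)^k/(1+z²)^{1+k/2} dz
  = −(i^{1+k}·k/(2·Γ(1−α)·Γ(1+k/2))) · ∑_{n=0}^{k} iⁿ·C(k,n)·Γ((1+α+k−n)/2)·Γ((1−α+n)/2)`. -/
theorem weylMarchaud_phik_at_zero
    (α : ℝ) (hα : α ∈ Set.Ioo (0:ℝ) 1) (k : ℕ) (hk : 0 < k) :
    (-Complex.I * (k : ℂ) / Complex.ofReal (Real.Gamma (1 - α))) *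
        (∫ z in Ioi (0:ℝ),
          Complex.ofReal (z ^ (-α)) * (-(z : ℂ) + Complex.I) ^ k /
            Complex.ofReal ((1 + z ^ 2) ^ (1 + (k : ℝ) / 2)))
      = -(Complex.I ^ (1 + k) * (k : ℂ) /
            (2 * Complex.ofReal (Real.Gamma (1 - α)) *
              Complex.ofReal (Real.Gamma (1 + (k : ℝ) / 2)))) *
          ∑ n ∈ Finset.range (k + 1),
            Complex.I ^ n * (k.choose n : ℂ) *
              Complex.ofReal (Real.Gamma ((1 + α + (k : ℝ) - (n : ℝ)) / 2)) *
              Complex.ofReal (Real.Gamma ((1 - α + (n : ℝ)) / 2)) := by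
  obtain ⟨hα0, hα1⟩ := hα
  set p : ℝ := 1 + (k:ℝ)/2 with hp
  have hs : ∀ n : ℕ, n ≤ k → 0 < (n:ℝ)+1-α ∧ (n:ℝ)+1-α < 2*p := by
    intro n hn
    have : (n:ℝ) ≤ k := Nat.cast_le.mpr hn
    constructor
    · have : (0:ℝ) ≤ n := Nat.cast_nonneg n
      linarith
    · rw [hp]; push_cast; linarith
  -- pointwise expansion
  have hpt : ∀ z ∈ Ioi (0:ℝ),
      Complex.ofReal (z ^ (-α)) * (-(z : ℂ) + Complex.I) ^ k /
          Complex.ofReal ((1 + z ^ 2) ^ p)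
        = ∑ n ∈ Finset.range (k+1),
            ((-1:ℂ))^n * Complex.I^(k-n) * (k.choose n : ℂ) *
              Complex.ofReal (z^(((n:ℝ)+1-α)-1) * (1+z^2)^(-p)) := by
    intro z hz
    simp only [mem_Ioi] at hz
    have h2 : (0:ℝ) < 1 + z^2 := by positivity
    rw [add_pow, Finset.mul_sum, Finset.sum_div]
    refine Finset.sum_congr rfl (fun n hn => ?_)
    have e : (z:ℂ)^n * Complex.ofReal (z^(-α)) / Complex.ofReal ((1+z^2)^p)
        = Complex.ofReal (z^(((n:ℝ)+1-α)-1) * (1+z^2)^(-p)) := by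
      rw [← Complex.ofReal_pow, ← Complex.ofReal_mul, ← Complex.ofReal_div]
      congr 1
      rw [Real.rpow_neg h2.le, ← Real.rpow_natCast z n, ← Real.rpow_add hz,
        div_eq_mul_inv]
      congr 2
      ring
    rw [neg_pow]
    rw [← e]
    push_cast
    ring
  -- integral of each summand
  have hval : ∀ n : ℕ, n ≤ k →
      ∫ z in Ioi (0:ℝ), z^(((n:ℝ)+1-α)-1) * (1+z^2)^(-p)
        = Real.Gamma (((n:ℝ)+1-α)/2) * Real.Gamma (p - ((n:ℝ)+1-α)/2)
            / (2 * Real.Gamma p) :=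
    fun n hn => betaSq_val ((n:ℝ)+1-α) p (hs n hn).1 (hs n hn).2
  have hintg : ∀ n ∈ Finset.range (k+1),
      IntegrableOn (fun z : ℝ =>
        ((-1:ℂ))^n * Complex.I^(k-n) * (k.choose n : ℂ) *
          Complex.ofReal (z^(((n:ℝ)+1-α)-1) * (1+z^2)^(-p))) (Ioi 0) := by
    intro n hn
    have hnk : n ≤ k := Nat.lt_succ_iff.mp (Finset.mem_range.mp hn)
    exact ((betaSq_int ((n:ℝ)+1-α) p (hs n hnk).1 (hs n hnk).2).ofReal (𝕜 := ℂ)).const_mul _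
  -- compute the integral
  have hI : (∫ z in Ioi (0:ℝ),
        Complex.ofReal (z ^ (-α)) * (-(z : ℂ) + Complex.I) ^ k /
          Complex.ofReal ((1 + z ^ 2) ^ p))
      = ∑ n ∈ Finset.range (k+1),
          ((-1:ℂ))^n * Complex.I^(k-n) * (k.choose n : ℂ) *
            Complex.ofReal (Real.Gamma (((n:ℝ)+1-α)/2) * Real.Gamma (p - ((n:ℝ)+1-α)/2)
              / (2 * Real.Gamma p)) := by
    rw [setIntegral_congr_fun measurableSet_Ioi hpt, MeasureTheory.integral_finset_sum _ hintg]
    refine Finset.sum_congr rfl (fun n hn => ?_)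
    have hnk : n ≤ k := Nat.lt_succ_iff.mp (Finset.mem_range.mp hn)
    rw [MeasureTheory.integral_const_mul, show (∫ z in Ioi (0:ℝ),
        ((z^(((n:ℝ)+1-α)-1) * (1+z^2)^(-p) : ℝ) : ℂ))
      = ((∫ z in Ioi (0:ℝ), z^(((n:ℝ)+1-α)-1) * (1+z^2)^(-p) : ℝ) : ℂ) from integral_ofReal,
      hval n hnk]
  rw [hI, Finset.mul_sum, Finset.mul_sum]
  refine Finset.sum_congr rfl (fun n hn => ?_)
  have hnk : n ≤ k := Nat.lt_succ_iff.mp (Finset.mem_range.mp hn)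
  have hG1 : Real.Gamma (1-α) ≠ 0 := (Real.Gamma_pos_of_pos (by linarith)).ne'
  have hGk : Real.Gamma p ≠ 0 := (Real.Gamma_pos_of_pos (by rw [hp]; positivity)).ne'
  have ea : ((n:ℝ)+1-α)/2 = (1 - α + (n:ℝ))/2 := by ring
  have eb : p - ((n:ℝ)+1-α)/2 = (1 + α + (k:ℝ) - (n:ℝ))/2 := by rw [hp]; ring
  rw [eb, ea, ← mul_assoc, Ipow_helper k n hnk, pow_add, pow_one]
  have hG1c : (Real.Gamma (1-α) : ℂ) ≠ 0 := by exact_mod_cast hG1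
  have hGkc : (Real.Gamma p : ℂ) ≠ 0 := by exact_mod_cast hGk
  push_cast
  rw [hp] at hGkc ⊢
  push_cast at hGkc ⊢
  field_simp
end

section
/- Let α ∈ (0,2) and let k be a positive integer. Then −(ik·2^{α−1}·Γ((1+α)/2)/(√π·Γ(1−α/2))) ∫_{0}^{∞} z^{−α} · [(−z+i)^k − (z+i)^k]/(1+z²)^{1+k/2} dz = (i^{k}·2^{α}·Γ((1+α)/2)/(√π·Γ(k/2)·Γ(1−α/2))) · ∑_{n=0}^{k} sin(nπ/2) · C(k,n) · Γ((1+α+k−n)/2) · Γ((1−α+n)/2). -/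
open MeasureTheory Set

lemma real_beta (a b : ℝ) (ha : 0 < a) (hb : 0 < b) :
    ∫ x in Ioo (0:ℝ) 1, x ^ (a - 1) * (1 - x) ^ (b - 1)
      = Real.Gamma a * Real.Gamma b / Real.Gamma (a + b) := by
  have key : Complex.betaIntegral a b =
      ((∫ x in Ioo (0:ℝ) 1, x ^ (a - 1) * (1 - x) ^ (b - 1) : ℝ) : ℂ) := by
    rw [Complex.betaIntegral, intervalIntegral.integral_of_le zero_le_one,
      integral_Ioc_eq_integral_Ioo, ]
    rw [show (((∫ x in Ioo (0:ℝ) 1, x ^ (a - 1) * (1 - x) ^ (b - 1)) : ℝ) : ℂ)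
        = ∫ x in Ioo (0:ℝ) 1, ((x ^ (a - 1) * (1 - x) ^ (b - 1) : ℝ) : ℂ) from
      integral_ofReal.symm]
    refine setIntegral_congr_fun measurableSet_Ioo fun x hx => ?_
    rw [Complex.ofReal_mul, Complex.ofReal_cpow hx.1.le, Complex.ofReal_cpow (by linarith [hx.2])]
    push_cast
    ring
  have h1 := Complex.Gamma_mul_Gamma_eq_betaIntegral (s := (a:ℂ)) (t := (b:ℂ))
    (by simpa using ha) (by simpa using hb)
  rw [key] at h1
  have h2 : ((a : ℂ) + b) = ((a + b : ℝ) : ℂ) := by push_cast; ring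
  rw [h2, Complex.Gamma_ofReal, Complex.Gamma_ofReal, Complex.Gamma_ofReal] at h1
  have hG : Real.Gamma (a + b) ≠ 0 := (Real.Gamma_pos_of_pos (by linarith)).ne'
  have := h1
  rw [← Complex.ofReal_mul, ← Complex.ofReal_mul] at this
  have h3 : Real.Gamma a * Real.Gamma b =
      Real.Gamma (a + b) * ∫ x in Ioo (0:ℝ) 1, x ^ (a - 1) * (1 - x) ^ (b - 1) := by
    exact_mod_cast this
  rw [h3]
  field_simp

lemma g_integrable (a b : ℝ) (ha : 0 < a) (hb : 0 < b) :
    IntegrableOn (fun x : ℝ => x ^ (a - 1) * (1 - x) ^ (b - 1)) (Ioo 0 1) := by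
  have hc : IntervalIntegrable (fun x : ℝ =>
      (x : ℂ) ^ ((a:ℂ) - 1) * (1 - (x : ℂ)) ^ ((b:ℂ) - 1)) volume 0 1 :=
    Complex.betaIntegral_convergent (by simpa using ha) (by simpa using hb)
  have hIoc : IntegrableOn (fun x : ℝ =>
      (x : ℂ) ^ ((a:ℂ) - 1) * (1 - (x : ℂ)) ^ ((b:ℂ) - 1)) (Ioc 0 1) := by
    rw [intervalIntegrable_iff_integrableOn_Ioc_of_le zero_le_one] at hc
    exact hc
  have hIoo := hIoc.mono_set Ioo_subset_Ioc_self
  have heq : ∀ x ∈ Ioo (0:ℝ) 1,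
      ((x ^ (a - 1) * (1 - x) ^ (b - 1) : ℝ) : ℂ)
        = (x : ℂ) ^ ((a:ℂ) - 1) * (1 - (x : ℂ)) ^ ((b:ℂ) - 1) := by
    intro x hx
    rw [Complex.ofReal_mul, Complex.ofReal_cpow hx.1.le,
      Complex.ofReal_cpow (by linarith [hx.2])]
    push_cast; ring
  have h2 : IntegrableOn (fun x : ℝ =>
      ((x ^ (a - 1) * (1 - x) ^ (b - 1) : ℝ) : ℂ)) (Ioo 0 1) :=
    hIoo.congr_fun (fun x hx => (heq x hx).symm) measurableSet_Ioo
  simpa [IntegrableOn] using h2.re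

lemma subst_lemmas (s p : ℝ) (hs : 0 < s) (hsp : s < 2*p) :
    IntegrableOn (fun z : ℝ => z ^ (s - 1) * (1 + z ^ 2) ^ (-p)) (Ioi 0) ∧
    ∫ z in Ioi (0:ℝ), z ^ (s - 1) * (1 + z ^ 2) ^ (-p)
      = Real.Gamma (s/2) * Real.Gamma (p - s/2) / (2 * Real.Gamma p) := by
  set f : ℝ → ℝ := fun z => z^2/(1+z^2) with hf
  set f' : ℝ → ℝ := fun z => 2*z/(1+z^2)^2 with hf'
  set g : ℝ → ℝ := fun x => x ^ (s/2 - 1) * (1 - x) ^ (p - s/2 - 1) with hg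
  have hz2 : ∀ z : ℝ, (0:ℝ) < 1 + z^2 := fun z => by positivity
  have hderiv : ∀ z ∈ Ioi (0:ℝ), HasDerivWithinAt f (f' z) (Ioi 0) z := by
    intro z hz
    have hnum : HasDerivAt (fun z:ℝ => z^2) (2*z) z := by simpa using hasDerivAt_pow 2 z
    have hden : HasDerivAt (fun z:ℝ => 1+z^2) (2*z) z := hnum.const_add 1
    have h1 : HasDerivAt f ((2*z*(1+z^2) - z^2*(2*z))/(1+z^2)^2) z := by
      exact hnum.div hden (hz2 z).ne'
    have h2 : (2*z*(1+z^2) - z^2*(2*z))/(1+z^2)^2 = f' z := by rw [hf']; ring_nf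
    rw [h2] at h1
    exact h1.hasDerivWithinAt
  have hinj : InjOn f (Ioi 0) := by
    have : StrictMonoOn f (Ioi 0) := by
      intro x hx y hy hxy
      simp only [hf, mem_Ioi] at *
      rw [div_lt_div_iff₀ (hz2 x) (hz2 y)]
      nlinarith
    exact this.injOn
  have himg : f '' Ioi 0 = Ioo 0 1 := by
    ext x
    constructor
    · rintro ⟨z, hz, rfl⟩
      simp only [mem_Ioi] at hz
      constructor
      · positivity
      · rw [div_lt_one (hz2 z)]; nlinarith
    · intro hx
      refine ⟨Real.sqrt (x/(1-x)), ?_, ?_⟩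
      · have h1x : (0:ℝ) < 1 - x := by linarith [hx.2]
        exact mem_Ioi.mpr (Real.sqrt_pos.mpr (div_pos hx.1 h1x))
      · have h1x : (0:ℝ) < 1 - x := by linarith [hx.2]
        have : Real.sqrt (x/(1-x)) ^ 2 = x/(1-x) :=
          Real.sq_sqrt (div_nonneg hx.1.le h1x.le)
        simp only [hf, this]
        field_simp
        ring
  have hgint : IntegrableOn g (Ioo 0 1) := by
    have := g_integrable (s/2) (p - s/2) (by linarith) (by linarith)
    simpa only [hg, show s/2 - 1 = s/2 - 1 by rfl, show p - s/2 - 1 = p - s/2 - 1 by rfl] using this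
  have hkey : ∀ z ∈ Ioi (0:ℝ), |f' z| • g (f z) = 2 * (z ^ (s - 1) * (1 + z ^ 2) ^ (-p)) := by
    intro z hz
    rw [mem_Ioi] at hz
    have hfz : f' z = 2*z/(1+z^2)^2 := rfl
    have habs : |f' z| = 2*z/(1+z^2)^2 := by
      rw [hfz, abs_of_pos (by positivity)]
    have e1 : (z^2/(1+z^2)) ^ (s/2-1) = z^(s-2) / (1+z^2) ^ (s/2-1) := by
      rw [Real.div_rpow (by positivity) (hz2 z).le, ← Real.rpow_natCast z 2,
        ← Real.rpow_mul hz.le]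
      norm_num
      rw [show (2:ℝ)*(s/2-1) = s-2 by ring]
    have e2 : (1:ℝ) - z^2/(1+z^2) = (1+z^2)⁻¹ := by
      field_simp
      ring
    have e3 : ((1+z^2)⁻¹) ^ (p-s/2-1) = ((1+z^2) ^ (p-s/2-1))⁻¹ :=
      Real.inv_rpow (hz2 z).le _
    rw [habs, smul_eq_mul, hg, hf]
    simp only [e2, e3, e1]
    rw [show z ^ (s-1) = z * z^(s-2) by
        rw [show s - 1 = 1 + (s-2) by ring, Real.rpow_add hz, Real.rpow_one],
      show ((1:ℝ)+z^2) ^ (-p) = ((1+z^2)^(s/2-1) * (1+z^2)^(p-s/2-1) * (1+z^2)^2)⁻¹ by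
        rw [← Real.rpow_natCast (1+z^2) 2, ← Real.rpow_add (hz2 z), ← Real.rpow_add (hz2 z),
          ← Real.rpow_neg (hz2 z).le]
        norm_num
        ring_nf]
    have h1 : ((1:ℝ)+z^2)^(s/2-1) ≠ 0 := (Real.rpow_pos_of_pos (hz2 z) _).ne'
    have h2 : ((1:ℝ)+z^2)^(p-s/2-1) ≠ 0 := (Real.rpow_pos_of_pos (hz2 z) _).ne'
    have h3 : ((1:ℝ)+z^2)^2 ≠ 0 := by positivity
    field_simp
  have hsub := integral_image_eq_integral_abs_deriv_smul measurableSet_Ioi hderiv hinj g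
  rw [himg] at hsub
  have hint2 : IntegrableOn (fun z => |f' z| • g (f z)) (Ioi 0) :=
    (integrableOn_image_iff_integrableOn_abs_deriv_smul measurableSet_Ioi hderiv hinj g).mp
      (himg ▸ hgint)
  have hint3 : IntegrableOn (fun z : ℝ => 2 * (z ^ (s - 1) * (1 + z ^ 2) ^ (-p))) (Ioi 0) :=
    hint2.congr_fun hkey measurableSet_Ioi
  constructor
  · have h6 : IntegrableOn (fun z : ℝ => 2⁻¹ * (2 * (z ^ (s - 1) * (1 + z ^ 2) ^ (-p))))
        (Ioi 0) := hint3.const_mul _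
    refine h6.congr_fun (fun z _ => by ring) measurableSet_Ioi
  · have h4 : ∫ z in Ioi (0:ℝ), |f' z| • g (f z)
        = ∫ z in Ioi (0:ℝ), 2 * (z ^ (s - 1) * (1 + z ^ 2) ^ (-p)) :=
      setIntegral_congr_fun measurableSet_Ioi hkey
    rw [h4, integral_const_mul] at hsub
    have h5 : ∫ x in Ioo (0:ℝ) 1, g x
        = Real.Gamma (s/2) * Real.Gamma (p - s/2) / Real.Gamma (s/2 + (p - s/2)) :=
      real_beta (s/2) (p - s/2) (by linarith) (by linarith)
    rw [h5, show s/2 + (p - s/2) = p by ring] at hsub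
    have hp : 0 < p := by linarith
    have hGp : (0:ℝ) < Real.Gamma p := Real.Gamma_pos_of_pos hp
    field_simp at hsub ⊢
    linarith

lemma term_eval (α : ℝ) (hα0 : 0 < α) (hα2 : α < 2) (k n : ℕ) (hn : n ≤ k)
    (hodd : Odd (k - n)) :
    IntegrableOn (fun z : ℝ => Complex.ofReal (z ^ (-α)) *
      (Complex.I ^ n * ((-(z:ℂ)) ^ (k - n) - (z:ℂ) ^ (k - n)) * ((k.choose n : ℕ) : ℂ)) /
      Complex.ofReal ((1 + z ^ 2) ^ (1 + (k:ℝ)/2))) (Ioi 0) ∧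
    (∫ z in Ioi (0:ℝ), Complex.ofReal (z ^ (-α)) *
      (Complex.I ^ n * ((-(z:ℂ)) ^ (k - n) - (z:ℂ) ^ (k - n)) * ((k.choose n : ℕ) : ℂ)) /
      Complex.ofReal ((1 + z ^ 2) ^ (1 + (k:ℝ)/2)))
      = (-2) * Complex.I ^ n * ((k.choose n : ℕ) : ℂ) *
        Complex.ofReal (Real.Gamma ((1 - α + ((k:ℝ) - n)) / 2) *
          Real.Gamma ((1 + α + n) / 2) / (2 * Real.Gamma (1 + (k:ℝ)/2))) := by
  set m : ℕ := k - n with hmdef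
  have hmr : ((m : ℕ) : ℝ) = (k:ℝ) - n := by
    rw [hmdef, Nat.cast_sub hn]
  have hm1 : 1 ≤ m := hodd.pos
  have hmk : (m:ℝ) ≤ k := by
    rw [hmr]; simp
  set s : ℝ := (m:ℝ) + 1 - α with hsdef
  have hs : 0 < s := by
    have : (1:ℝ) ≤ (m:ℝ) := by exact_mod_cast hm1
    simp only [hsdef]; linarith
  have hsp : s < 2 * (1 + (k:ℝ)/2) := by
    simp only [hsdef]; linarith
  obtain ⟨hi, hv⟩ := subst_lemmas s (1 + (k:ℝ)/2) hs hsp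
  have hpt : ∀ z ∈ Ioi (0:ℝ),
      Complex.ofReal (z ^ (-α)) *
        (Complex.I ^ n * ((-(z:ℂ)) ^ m - (z:ℂ) ^ m) * ((k.choose n : ℕ) : ℂ)) /
        Complex.ofReal ((1 + z ^ 2) ^ (1 + (k:ℝ)/2))
      = ((-2) * Complex.I ^ n * ((k.choose n : ℕ) : ℂ)) *
        Complex.ofReal (z ^ (s - 1) * (1 + z ^ 2) ^ (-(1 + (k:ℝ)/2))) := by
    intro z hz
    rw [mem_Ioi] at hz
    have h1 : (-(z:ℂ)) ^ m = -((z:ℂ) ^ m) := hodd.neg_pow _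
    have hreal : z ^ (-α) * z ^ (m:ℕ) * ((1 + z ^ 2) ^ (1 + (k:ℝ)/2))⁻¹
        = z ^ (s - 1) * (1 + z ^ 2) ^ (-(1 + (k:ℝ)/2)) := by
      rw [← Real.rpow_natCast z m, ← Real.rpow_add hz,
        ← Real.rpow_neg (by positivity : (0:ℝ) ≤ 1 + z ^ 2),
        show -α + (m:ℝ) = s - 1 by simp only [hsdef]; ring]
    calc Complex.ofReal (z ^ (-α)) *
          (Complex.I ^ n * ((-(z:ℂ)) ^ m - (z:ℂ) ^ m) * ((k.choose n : ℕ) : ℂ)) /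
          Complex.ofReal ((1 + z ^ 2) ^ (1 + (k:ℝ)/2))
        = ((-2) * Complex.I ^ n * ((k.choose n : ℕ) : ℂ)) *
          (Complex.ofReal (z ^ (-α)) * Complex.ofReal (z ^ (m:ℕ)) *
            (Complex.ofReal ((1 + z ^ 2) ^ (1 + (k:ℝ)/2)))⁻¹) := by
          rw [h1, ← Complex.ofReal_pow]
          ring
      _ = _ := by
          rw [← Complex.ofReal_inv, ← Complex.ofReal_mul, ← Complex.ofReal_mul, hreal]
  have hci : IntegrableOn (fun z : ℝ =>
      ((-2) * Complex.I ^ n * ((k.choose n : ℕ) : ℂ)) *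
        Complex.ofReal (z ^ (s - 1) * (1 + z ^ 2) ^ (-(1 + (k:ℝ)/2)))) (Ioi 0) :=
    (hi.ofReal.const_mul _)
  constructor
  · exact hci.congr_fun (fun z hz => (hpt z hz).symm) measurableSet_Ioi
  · rw [setIntegral_congr_fun measurableSet_Ioi hpt, integral_const_mul,
      show (∫ a in Ioi (0:ℝ), ((a ^ (s - 1) * (1 + a ^ 2) ^ (-(1 + (k:ℝ)/2)) : ℝ) : ℂ))
          = (((∫ a in Ioi (0:ℝ), a ^ (s - 1) * (1 + a ^ 2) ^ (-(1 + (k:ℝ)/2)) : ℝ)) : ℂ) from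
        integral_ofReal, hv]
    have e1 : s / 2 = (1 - α + ((k:ℝ) - n)) / 2 := by
      simp only [hsdef]; rw [← hmr]; ring
    rw [e1, show 1 + (k:ℝ)/2 - (1 - α + ((k:ℝ) - (n:ℝ)))/2 = (1 + α + (n:ℝ))/2 by ring]


lemma final_alg (K A G1 SP G2 In Ch GA GB Gk e : ℂ) (he : e * e = 1) (hK : K ≠ 0)
    (hSP : SP ≠ 0) (hG2 : G2 ≠ 0) (hGk : Gk ≠ 0) :
    -(Complex.I * K * A * G1 / (SP * G2)) * (-2 * In * Ch * (GA * GB / (2 * (K / 2 * Gk))))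
      = In * Complex.I * e * (2 * A) * G1 / (SP * Gk * G2) * (e * Ch * GB * GA) := by
  field_simp
  linear_combination (-(A * G1 * In * Ch * GA * GB)) * he


/-- For `α ∈ (0,2)` and `k` a positive integer,
`−(ik·2^{α−1}·Γ((1+α)/2)/(√π·Γ(1−α/2))) ∫_{0}^{∞} z^{−α}·[(−z+i)^k − (z+i)^k]/(1+z²)^{1+k/2} dz
  = (i^k·2^α·Γ((1+α)/2)/(√π·Γ(k/2)·Γ(1−α/2))) ·
      ∑_{n=0}^{k} sin(nπ/2)·C(k,n)·Γ((1+α+k−n)/2)·Γ((1−α+n)/2)`. -/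
theorem fracLap_phik_at_zero
    (α : ℝ) (hα : α ∈ Set.Ioo (0:ℝ) 2) (k : ℕ) (hk : 0 < k) :
    -(Complex.I * (k : ℂ) * Complex.ofReal ((2:ℝ) ^ (α - 1)) *
          Complex.ofReal (Real.Gamma ((1 + α) / 2)) /
          (Complex.ofReal (Real.sqrt Real.pi) * Complex.ofReal (Real.Gamma (1 - α / 2)))) *
        (∫ z in Ioi (0:ℝ),
          Complex.ofReal (z ^ (-α)) * ((-(z : ℂ) + Complex.I) ^ k - ((z : ℂ) + Complex.I) ^ k) /
            Complex.ofReal ((1 + z ^ 2) ^ (1 + (k : ℝ) / 2)))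
      = (Complex.I ^ k * Complex.ofReal ((2:ℝ) ^ α) *
            Complex.ofReal (Real.Gamma ((1 + α) / 2)) /
            (Complex.ofReal (Real.sqrt Real.pi) * Complex.ofReal (Real.Gamma ((k : ℝ) / 2)) *
              Complex.ofReal (Real.Gamma (1 - α / 2)))) *
          ∑ n ∈ Finset.range (k + 1),
            Complex.ofReal (Real.sin ((n : ℝ) * Real.pi / 2)) * (k.choose n : ℂ) *
              Complex.ofReal (Real.Gamma ((1 + α + (k : ℝ) - (n : ℝ)) / 2)) *
              Complex.ofReal (Real.Gamma ((1 - α + (n : ℝ)) / 2)) := by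
  obtain ⟨hα0, hα2⟩ := hα
  set g : ℕ → ℝ → ℂ := fun n z =>
    Complex.ofReal (z ^ (-α)) *
      (Complex.I ^ n * ((-(z:ℂ)) ^ (k - n) - (z:ℂ) ^ (k - n)) * ((k.choose n : ℕ) : ℂ)) /
      Complex.ofReal ((1 + z ^ 2) ^ (1 + (k:ℝ)/2)) with hgdef
  have hF : ∀ z : ℝ,
      Complex.ofReal (z ^ (-α)) * ((-(z:ℂ) + Complex.I) ^ k - ((z:ℂ) + Complex.I) ^ k) /
        Complex.ofReal ((1 + z ^ 2) ^ (1 + (k:ℝ)/2))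
      = ∑ n ∈ Finset.range (k+1), g n z := by
    intro z
    rw [show (-(z:ℂ) + Complex.I) = Complex.I + (-(z:ℂ)) by ring,
      show ((z:ℂ) + Complex.I) = Complex.I + (z:ℂ) by ring, add_pow, add_pow,
      ← Finset.sum_sub_distrib, Finset.mul_sum, Finset.sum_div]
    exact Finset.sum_congr rfl fun n _ => by simp only [hgdef]; ring
  have hgzero : ∀ n : ℕ, Even (k - n) → g n = fun _ => 0 := by
    intro n he
    funext z
    simp only [hgdef, he.neg_pow, sub_self, mul_zero, zero_mul, zero_div]
  have hint : ∀ n ∈ Finset.range (k+1), IntegrableOn (g n) (Ioi 0) := by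
    intro n hn
    rw [Finset.mem_range, Nat.lt_succ_iff] at hn
    rcases Nat.even_or_odd (k - n) with he | ho
    · rw [hgzero n he]
      exact integrable_zero _ _ _
    · exact (term_eval α hα0 hα2 k n hn ho).1
  have hswap : (∫ z in Ioi (0:ℝ),
        Complex.ofReal (z ^ (-α)) * ((-(z:ℂ) + Complex.I) ^ k - ((z:ℂ) + Complex.I) ^ k) /
          Complex.ofReal ((1 + z ^ 2) ^ (1 + (k:ℝ)/2)))
      = ∑ n ∈ Finset.range (k+1), ∫ z in Ioi (0:ℝ), g n z := by
    rw [setIntegral_congr_fun measurableSet_Ioi (fun z _ => hF z)]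
    exact integral_finset_sum _ hint
  rw [hswap]
  conv_rhs => rw [← Finset.sum_range_reflect]
  rw [Finset.mul_sum, Finset.mul_sum]
  refine Finset.sum_congr rfl fun n hn => ?_
  rw [Finset.mem_range, Nat.lt_succ_iff] at hn
  simp only [Nat.add_sub_cancel]
  rcases Nat.even_or_odd (k - n) with he | ho
  · have hg0 : (∫ z in Ioi (0:ℝ), g n z) = 0 := by
      rw [hgzero n he]; simp
    obtain ⟨j, hj⟩ := he
    have hsin0 : Real.sin ((↑(k-n):ℝ) * Real.pi / 2) = 0 := by
      rw [hj]
      push_cast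
      rw [show ((j:ℝ) + j) * Real.pi / 2 = (j:ℝ) * Real.pi by ring, Real.sin_nat_mul_pi]
    rw [hg0, hsin0, mul_zero]
    simp
  · have hval := (term_eval α hα0 hα2 k n hn ho).2
    obtain ⟨j, hj⟩ := ho
    rw [hval]
    have hknr : ((k - n : ℕ) : ℝ) = (k:ℝ) - n := Nat.cast_sub hn
    have hsin : Real.sin ((↑(k-n):ℝ) * Real.pi / 2) = (-1:ℝ)^j := by
      rw [hj]
      push_cast
      rw [show ((2*(j:ℝ)) + 1) * Real.pi / 2 = Real.pi/2 + (j:ℤ) * Real.pi by push_cast; ring,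
        Real.sin_add_int_mul_pi, Real.sin_pi_div_two, mul_one, zpow_natCast]
    have hch : (k.choose (k-n)) = k.choose n := Nat.choose_symm hn
    have hIk : Complex.I ^ k = Complex.I ^ n * Complex.I * ((-1:ℂ))^j := by
      have hkn : k = n + (2*j+1) := by omega
      rw [hkn, pow_add, pow_add, pow_mul, Complex.I_sq]
      ring
    have hΓ : Real.Gamma (1 + (k:ℝ)/2) = ((k:ℝ)/2) * Real.Gamma ((k:ℝ)/2) := by
      have hk2 : (0:ℝ) < (k:ℝ)/2 := by positivity
      rw [show 1 + (k:ℝ)/2 = (k:ℝ)/2 + 1 by ring, Real.Gamma_add_one hk2.ne']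
    have h2α : (2:ℝ)^α = 2 * (2:ℝ)^(α-1) := by
      rw [show α = 1 + (α - 1) by ring, Real.rpow_add two_pos, Real.rpow_one]
      ring_nf
    have hG1 : 0 < Real.Gamma ((1+α)/2) := Real.Gamma_pos_of_pos (by linarith)
    have hG2 : 0 < Real.Gamma (1 - α/2) := Real.Gamma_pos_of_pos (by linarith)
    have hGk : 0 < Real.Gamma ((k:ℝ)/2) := Real.Gamma_pos_of_pos (by positivity)
    have hsp : 0 < Real.sqrt Real.pi := Real.sqrt_pos.mpr Real.pi_pos
    have h2a : (0:ℝ) < (2:ℝ)^(α-1) := by positivity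
    have hkR : (0:ℝ) < (k:ℝ) := by exact_mod_cast hk
    rw [hsin, hch, hIk, hΓ, h2α, hknr,
      show (1 + α + (k:ℝ) - ((k:ℝ) - (n:ℝ)))/2 = (1+α+(n:ℝ))/2 by ring]
    have hkC : ((k:ℕ):ℂ) ≠ 0 := Nat.cast_ne_zero.mpr hk.ne'
    push_cast
    exact final_alg _ _ _ _ _ _ _ _ _ _ _
      (by rw [← mul_pow]; norm_num) hkC
      (Complex.ofReal_ne_zero.mpr hsp.ne') (Complex.ofReal_ne_zero.mpr hG2.ne')
      (Complex.ofReal_ne_zero.mpr hGk.ne')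
end
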